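/- arXiv:2102.01899 — 3 statements merged into one kernel-verified Lean document; each statement's English description precedes it below -/
import Mathlib

section
/- (Closed-form DSO solution, morning.) Under the reduced-network assumptions, the explicit collection (q_i, ρ_i, p_i) defined by q_i(t) = μ̂_i·1_{𝒯_i}(t), ρ_i = s(t_i^-) + c_i, and p_i(t) = ρ_i − s(t) − c_i − Σ_{j=1}^{i−1} p_j(t) for t ∈ 𝒯_i with p_i(t) = 0 otherwise, satisfies p_i(t) ≥ 0 for all i, t, is a pricing equilibrium (satisfies (E1), (E2), (E3)), and the flow pattern (q_i) minimizes the social transport cost Σ_{i=1}^{N} ∫_0^T (s(t)+c_i)·r_i(t) dt over all feasible flow patterns (r_i). -/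
open MeasureTheory Finset Set
open scoped Classical

noncomputable section

/-- Basic corridor-network primitives: `N ≥ 1` bottlenecks, rush hour `[0,T]`,
capacities `μ`, demands `Q`, free-flow times `c`, and a continuous, strictly
quasi-convex schedule-delay function `s` with minimum `0` at `td ∈ (0,T)`. -/
def CorridorNet (N : ℕ) (T td : ℝ) (μ Q c : ℕ → ℝ) (s : ℝ → ℝ) : Prop :=
  1 ≤ N ∧ 0 < T ∧ td ∈ Set.Ioo (0:ℝ) T ∧
  (∀ i ∈ Finset.Icc 1 N, 0 < μ i ∧ 0 < Q i ∧ 0 ≤ c i) ∧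
  ContinuousOn s (Set.Icc 0 T) ∧ (∀ t ∈ Set.Icc (0:ℝ) T, 0 ≤ s t) ∧ s td = 0 ∧
  (∀ a ∈ Set.Icc (0:ℝ) T, ∀ b ∈ Set.Icc (0:ℝ) T, a ≠ b →
    ∀ l ∈ Set.Ioo (0:ℝ) 1, s (l * a + (1 - l) * b) < max (s a) (s b))

/-- Pricing equilibrium: bounded measurable nonnegative flows `q` and prices `p`
with constants `ρ`, satisfying (E1), (E2), (E3). -/
def IsPricingEq (N : ℕ) (T : ℝ) (μ Q c : ℕ → ℝ) (s : ℝ → ℝ)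
    (q p : ℕ → ℝ → ℝ) (ρ : ℕ → ℝ) : Prop :=
  (∀ i ∈ Finset.Icc 1 N, Measurable (q i) ∧ Measurable (p i)) ∧
  (∀ i ∈ Finset.Icc 1 N, ∃ M : ℝ, ∀ t ∈ Set.Icc (0:ℝ) T, q i t ≤ M ∧ p i t ≤ M) ∧
  (∀ i ∈ Finset.Icc 1 N, ∀ t ∈ Set.Icc (0:ℝ) T, 0 ≤ q i t ∧ 0 ≤ p i t) ∧
  (∀ i ∈ Finset.Icc 1 N, ∀ t ∈ Set.Icc (0:ℝ) T,
    ρ i ≤ s t + c i + ∑ j ∈ Finset.Icc 1 i, p j t ∧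
    (0 < q i t → s t + c i + ∑ j ∈ Finset.Icc 1 i, p j t = ρ i)) ∧
  (∀ i ∈ Finset.Icc 1 N, ∀ t ∈ Set.Icc (0:ℝ) T,
    (∑ j ∈ Finset.Icc i N, q j t) ≤ μ i ∧
    (0 < p i t → (∑ j ∈ Finset.Icc i N, q j t) = μ i)) ∧
  (∀ i ∈ Finset.Icc 1 N, ∫ t in (0:ℝ)..T, q i t = Q i)

/-- `μ̂ i = μ i − μ (i+1)` for `i < N`, and `μ̂ N = μ N`. -/
def muhat (N : ℕ) (μ : ℕ → ℝ) (i : ℕ) : ℝ :=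
  if i < N then μ i - μ (i + 1) else μ N

/-- Reduced-network assumptions: strictly decreasing capacities, strictly
increasing window lengths `T_i = Q_i/μ̂_i`, and windows `𝒯_i = [tm i, tp i] ⊆ (0,T)`
of length `T_i` with `s (tm i) = s (tp i)`. -/
def ReducedNet (N : ℕ) (T : ℝ) (μ Q : ℕ → ℝ) (s : ℝ → ℝ) (tm tp : ℕ → ℝ) : Prop :=
  (∀ i, 1 ≤ i → i < N → μ (i + 1) < μ i) ∧ 0 < μ N ∧
  (∀ i, 1 ≤ i → i < N → Q i / muhat N μ i < Q (i + 1) / muhat N μ (i + 1)) ∧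
  (∀ i ∈ Finset.Icc 1 N, 0 < tm i ∧ tp i < T ∧
    tp i - tm i = Q i / muhat N μ i ∧ s (tm i) = s (tp i))

/-- The explicit DSO collection: `q_i = μ̂_i·1_{𝒯_i}`, `ρ_i = s(t_i^-) + c_i`, and
`p_i(t) = ρ_i − s(t) − c_i − Σ_{j<i} p_j(t)` on `𝒯_i`, `0` otherwise. -/
def ExplicitDSO (N : ℕ) (μ c : ℕ → ℝ) (s : ℝ → ℝ) (tm tp : ℕ → ℝ)
    (q p : ℕ → ℝ → ℝ) (ρ : ℕ → ℝ) : Prop :=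
  (∀ i ∈ Finset.Icc 1 N, ∀ t : ℝ,
    q i t = if t ∈ Set.Icc (tm i) (tp i) then muhat N μ i else 0) ∧
  (∀ i ∈ Finset.Icc 1 N, ρ i = s (tm i) + c i) ∧
  (∀ i ∈ Finset.Icc 1 N, ∀ t : ℝ,
    p i t = if t ∈ Set.Icc (tm i) (tp i)
      then ρ i - s t - c i - ∑ j ∈ Finset.Icc 1 (i - 1), p j t else 0)

/-- A feasible flow pattern: bounded measurable nonnegative flows respecting
the capacity constraints and the demand conservation. -/
def FeasibleFlow (N : ℕ) (T : ℝ) (μ Q : ℕ → ℝ) (r : ℕ → ℝ → ℝ) : Prop :=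
  (∀ i ∈ Finset.Icc 1 N, Measurable (r i)) ∧
  (∀ i ∈ Finset.Icc 1 N, ∃ M : ℝ, ∀ t ∈ Set.Icc (0:ℝ) T, r i t ≤ M) ∧
  (∀ i ∈ Finset.Icc 1 N, ∀ t ∈ Set.Icc (0:ℝ) T, 0 ≤ r i t) ∧
  (∀ i ∈ Finset.Icc 1 N, ∀ t ∈ Set.Icc (0:ℝ) T, (∑ j ∈ Finset.Icc i N, r j t) ≤ μ i) ∧
  (∀ i ∈ Finset.Icc 1 N, ∫ t in (0:ℝ)..T, r i t = Q i)


/-- Bounded a.e.-strongly-measurable functions are interval integrable. -/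
lemma auxII {T : ℝ} (hT : 0 ≤ T) {f : ℝ → ℝ} (C : ℝ)
    (hm : AEStronglyMeasurable f (volume.restrict (Set.Ioc 0 T)))
    (hb : ∀ t ∈ Set.Ioc (0:ℝ) T, |f t| ≤ C) :
    IntervalIntegrable f volume 0 T := by
  rw [intervalIntegrable_iff, Set.uIoc_of_le hT]
  refine Integrable.mono' (g := fun _ => C)
    (integrableOn_const measure_Ioc_lt_top.ne) hm ?_
  exact (ae_restrict_iff' measurableSet_Ioc).2 (ae_of_all _ fun t ht => by
    simpa [Real.norm_eq_abs] using hb t ht)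

/-- Products of bounded a.e.-strongly-measurable functions are interval integrable. -/
lemma auxProd {T : ℝ} (hT : 0 ≤ T) {f g : ℝ → ℝ} {Cf Cg : ℝ}
    (hfm : AEStronglyMeasurable f (volume.restrict (Set.Ioc 0 T)))
    (hgm : AEStronglyMeasurable g (volume.restrict (Set.Ioc 0 T)))
    (hf : ∀ t ∈ Set.Ioc (0:ℝ) T, |f t| ≤ Cf)
    (hg : ∀ t ∈ Set.Ioc (0:ℝ) T, |g t| ≤ Cg) :
    IntervalIntegrable (fun t => f t * g t) volume 0 T := by
  refine auxII hT (Cf * Cg) (hfm.mul hgm) fun t ht => ?_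
  rw [abs_mul]
  exact mul_le_mul (hf t ht) (hg t ht) (abs_nonneg _) ((abs_nonneg _).trans (hf t ht))

/-- closed-form DSO solution, morning: the explicit collection is
nonnegatively priced, is a pricing equilibrium, and its flow pattern minimizes
the social transport cost over all feasible flow patterns. -/
theorem stmt8 (N : ℕ) (T td : ℝ) (μ Q c : ℕ → ℝ) (s : ℝ → ℝ)
    (tm tp : ℕ → ℝ) (q p : ℕ → ℝ → ℝ) (ρ : ℕ → ℝ)
    (hnet : CorridorNet N T td μ Q c s)
    (hred : ReducedNet N T μ Q s tm tp)
    (hdso : ExplicitDSO N μ c s tm tp q p ρ)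
    :
    (∀ i ∈ Finset.Icc 1 N, ∀ t ∈ Set.Icc (0:ℝ) T, 0 ≤ p i t) ∧
    IsPricingEq N T μ Q c s q p ρ ∧
    (∀ r : ℕ → ℝ → ℝ, FeasibleFlow N T μ Q r →
      (∑ i ∈ Finset.Icc 1 N, ∫ t in (0:ℝ)..T, (s t + c i) * q i t) ≤
      (∑ i ∈ Finset.Icc 1 N, ∫ t in (0:ℝ)..T, (s t + c i) * r i t)) := by
  obtain ⟨hN1, hT0, htd, hpos, hscont, hsnn, hstd0, hqc⟩ := hnet
  obtain ⟨hμdec, hμN, hTinc, hwin0⟩ := hred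
  obtain ⟨hq, hρ, hp⟩ := hdso
  have htd0 : 0 < td := htd.1
  have htdT : td < T := htd.2
  have htdm : td ∈ Set.Icc (0:ℝ) T := ⟨htd0.le, htdT.le⟩
  have hμh : ∀ i, 1 ≤ i → i ≤ N → 0 < muhat N μ i := by
    intro i h1 h2
    unfold muhat
    split
    · next h => linarith [hμdec i h1 h]
    · exact hμN
  have hwin : ∀ i, 1 ≤ i → i ≤ N →
      0 < tm i ∧ tp i < T ∧ tp i - tm i = Q i / muhat N μ i ∧ s (tm i) = s (tp i) :=
    fun i h1 h2 => hwin0 i (Finset.mem_Icc.2 ⟨h1, h2⟩)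
  have hQpos : ∀ i, 1 ≤ i → i ≤ N → 0 < Q i :=
    fun i h1 h2 => (hpos i (Finset.mem_Icc.2 ⟨h1, h2⟩)).2.1
  have hcnn : ∀ i, 1 ≤ i → i ≤ N → 0 ≤ c i :=
    fun i h1 h2 => (hpos i (Finset.mem_Icc.2 ⟨h1, h2⟩)).2.2
  have hlt : ∀ i, 1 ≤ i → i ≤ N → tm i < tp i := by
    intro i h1 h2
    have h := (hwin i h1 h2).2.2.1
    have := div_pos (hQpos i h1 h2) (hμh i h1 h2)
    linarith
  have hwinsub : ∀ i, 1 ≤ i → i ≤ N → Set.Icc (tm i) (tp i) ⊆ Set.Icc (0:ℝ) T := by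
    intro i h1 h2
    exact Set.Icc_subset_Icc (hwin i h1 h2).1.le (by linarith [(hwin i h1 h2).2.1, hlt i h1 h2])
  have htmI : ∀ i, 1 ≤ i → i ≤ N → tm i ∈ Set.Icc (0:ℝ) T :=
    fun i h1 h2 => hwinsub i h1 h2 ⟨le_rfl, (hlt i h1 h2).le⟩
  have huniq : ∀ x ∈ Set.Icc (0:ℝ) T, s x = 0 → x = td := by
    intro x hx h0
    by_contra hne
    have h2 := hqc x hx td htdm hne (1/2) ⟨by norm_num, by norm_num⟩
    have hmem : (1/2 : ℝ) * x + (1 - 1/2) * td ∈ Set.Icc (0:ℝ) T := by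
      constructor <;> nlinarith [hx.1, hx.2, htd0, htdT]
    have h3 := hsnn _ hmem
    rw [h0, hstd0] at h2
    simp only [max_self] at h2
    linarith
  have hdecr : ∀ a b, 0 ≤ a → a < b → b ≤ td → s b < s a := by
    intro a b ha hab hb
    have haT : a ∈ Set.Icc (0:ℝ) T := ⟨ha, by linarith⟩
    have hane : a ≠ td := by intro h; rw [h] at hab; linarith
    rcases eq_or_lt_of_le hb with rfl | hblt
    · rw [hstd0]
      rcases (hsnn a haT).lt_or_eq with h | h
      · exact h
      · exact absurd (huniq a haT h.symm) hane
    · set l := (td - b) / (td - a) with hl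
      have hta : 0 < td - a := by linarith
      have hl0 : 0 < l := div_pos (by linarith) hta
      have hl1 : l < 1 := (div_lt_one hta).2 (by linarith)
      have key := hqc a haT td htdm hane l ⟨hl0, hl1⟩
      have h3 : l * (td - a) = td - b := div_mul_cancel₀ _ hta.ne'
      have hcomb : l * a + (1 - l) * td = b := by linear_combination -h3
      rw [hcomb, hstd0, max_eq_left (hsnn a haT)] at key
      exact key
  have hincr : ∀ a b, td ≤ a → a < b → b ≤ T → s a < s b := by
    intro a b ha hab hb
    have hbT : b ∈ Set.Icc (0:ℝ) T := ⟨by linarith, hb⟩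
    have hbne : b ≠ td := by intro h; rw [h] at hab; linarith
    rcases eq_or_lt_of_le ha with rfl | halt
    · rw [hstd0]
      rcases (hsnn b hbT).lt_or_eq with h | h
      · exact h
      · exact absurd (huniq b hbT h.symm) hbne
    · set l := (a - td) / (b - td) with hl
      have htb : 0 < b - td := by linarith
      have hl0 : 0 < l := div_pos (by linarith) htb
      have hl1 : l < 1 := (div_lt_one htb).2 (by linarith)
      have key := hqc b hbT td htdm hbne l ⟨hl0, hl1⟩
      have h3 : l * (b - td) = a - td := div_mul_cancel₀ _ htb.ne'
      have hcomb : l * b + (1 - l) * td = a := by linear_combination h3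
      rw [hcomb, hstd0, max_eq_left (hsnn b hbT)] at key
      exact key
  have hstrad : ∀ i, 1 ≤ i → i ≤ N → tm i < td ∧ td < tp i := by
    intro i h1 h2
    obtain ⟨h0, hT', hlen, hse⟩ := hwin i h1 h2
    have hl := hlt i h1 h2
    constructor
    · by_contra h
      push_neg at h
      have := hincr (tm i) (tp i) h hl hT'.le
      linarith
    · by_contra h
      push_neg at h
      have := hdecr (tm i) (tp i) h0.le hl h
      linarith
  have hEin : ∀ i, 1 ≤ i → i ≤ N → ∀ t ∈ Set.Icc (tm i) (tp i), s t ≤ s (tm i) := by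
    intro i h1 h2 t ht
    obtain ⟨h0, hT', hlen, hse⟩ := hwin i h1 h2
    rcases le_or_gt t td with hta | hta
    · rcases eq_or_lt_of_le ht.1 with h | h
      · exact le_of_eq (congrArg s h.symm)
      · exact (hdecr (tm i) t h0.le h hta).le
    · rw [hse]
      rcases eq_or_lt_of_le ht.2 with h | h
      · exact le_of_eq (congrArg s h)
      · exact (hincr t (tp i) hta.le h hT'.le).le
  have hEout : ∀ i, 1 ≤ i → i ≤ N → ∀ t ∈ Set.Icc (0:ℝ) T,
      t ∉ Set.Icc (tm i) (tp i) → s (tm i) < s t := by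
    intro i h1 h2 t ht htn
    obtain ⟨h0, hT', hlen, hse⟩ := hwin i h1 h2
    rw [Set.mem_Icc, not_and_or, not_le, not_le] at htn
    rcases htn with h | h
    · exact hdecr t (tm i) ht.1 h (hstrad i h1 h2).1.le
    · rw [hse]
      exact hincr (tp i) t (hstrad i h1 h2).2.le h ht.2
  have hTi : ∀ i, 1 ≤ i → ∀ j, i < j → j ≤ N → Q i / muhat N μ i < Q j / muhat N μ j := by
    intro i h1 j
    induction j with
    | zero => omega
    | succ k ih =>
      intro hij hk
      rcases Nat.lt_or_ge i k with h | h
      · exact lt_trans (ih h (by omega)) (hTinc k (by omega) (by omega))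
      · have he : i = k := by omega
        subst he
        exact hTinc i h1 (by omega)
  have hnest : ∀ i j, 1 ≤ i → i < j → j ≤ N → tm j < tm i ∧ tp i < tp j := by
    intro i j h1 hij hj
    obtain ⟨hi0, hiT, hilen, hise⟩ := hwin i h1 (by omega)
    obtain ⟨hj0, hjT, hjlen, hjse⟩ := hwin j (by omega) hj
    have hstri := hstrad i h1 (by omega)
    have hstrj := hstrad j (by omega) hj
    have hL := hTi i h1 j hij hj
    have h1' : tm j < tm i := by
      by_contra hcon
      push_neg at hcon
      have hsm : s (tm j) ≤ s (tm i) := by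
        rcases eq_or_lt_of_le hcon with h | h
        · exact le_of_eq (congrArg s h.symm)
        · exact (hdecr (tm i) (tm j) hi0.le h hstrj.1.le).le
      have hsp : s (tp j) ≤ s (tp i) := by rw [← hise, ← hjse]; exact hsm
      have htp : tp j ≤ tp i := by
        by_contra hc2
        push_neg at hc2
        exact absurd hsp (not_le.2 (hincr (tp i) (tp j) hstri.2.le hc2 hjT.le))
      have hlen2 : tp j - tm j ≤ tp i - tm i := by linarith
      rw [hilen, hjlen] at hlen2
      linarith
    refine ⟨h1', ?_⟩
    by_contra hcon
    push_neg at hcon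
    have hsp : s (tp j) ≤ s (tp i) := by
      rcases eq_or_lt_of_le hcon with h | h
      · exact le_of_eq (congrArg s h)
      · exact (hincr (tp j) (tp i) hstrj.2.le h hiT.le).le
    have hsm : s (tm j) ≤ s (tm i) := by rw [hise, hjse]; exact hsp
    have htm : tm i ≤ tm j := by
      by_contra hc2
      push_neg at hc2
      exact absurd hsm (not_le.2 (hdecr (tm j) (tm i) hj0.le hc2 hstri.1.le))
    have hlen2 : tp j - tm j ≤ tp i - tm i := by linarith
    rw [hilen, hjlen] at hlen2
    linarith
  have hsubW : ∀ i j, 1 ≤ i → i ≤ j → j ≤ N →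
      Set.Icc (tm i) (tp i) ⊆ Set.Icc (tm j) (tp j) := by
    intro i j h1 hij hj
    rcases eq_or_lt_of_le hij with rfl | h
    · exact subset_rfl
    · exact Set.Icc_subset_Icc (hnest i j h1 h hj).1.le (hnest i j h1 h hj).2.le
  -- continuous extension of s
  set sc : ℝ → ℝ := fun t => s (min T (max t 0)) with hsc_def
  have hsc_mem : ∀ t : ℝ, min T (max t 0) ∈ Set.Icc (0:ℝ) T :=
    fun t => ⟨le_min hT0.le (le_max_right _ _), min_le_left _ _⟩
  have hsc_cont : Continuous sc :=
    hscont.comp_continuous (continuous_const.min (continuous_id.max continuous_const)) hsc_mem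
  have hsc_eq : ∀ t ∈ Set.Icc (0:ℝ) T, sc t = s t := by
    intro t ht
    simp only [hsc_def]
    rw [max_eq_left ht.1, min_eq_right ht.2]
  -- partial price sums
  have hPsum : ∀ i, i ≤ N → ∀ t, (∑ j ∈ Finset.Icc 1 i, p j t) =
      if 1 ≤ i ∧ t ∈ Set.Icc (tm i) (tp i) then s (tm i) - s t else 0 := by
    intro i
    induction i with
    | zero => intro _ t; simp
    | succ k ih =>
      intro hk t
      have hkN : k ≤ N := by omega
      have hmem1 : k + 1 ∈ Finset.Icc 1 N := Finset.mem_Icc.2 ⟨by omega, hk⟩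
      rw [Finset.sum_Icc_succ_top (by omega : 1 ≤ k + 1), hp (k+1) hmem1 t, hρ (k+1) hmem1]
      simp only [Nat.add_sub_cancel]
      rw [ih hkN t]
      by_cases hmem : t ∈ Set.Icc (tm (k+1)) (tp (k+1))
      · rw [if_pos hmem,
          if_pos (show 1 ≤ k + 1 ∧ t ∈ Set.Icc (tm (k+1)) (tp (k+1)) from ⟨by omega, hmem⟩)]
        ring
      · rw [if_neg hmem, if_neg (show ¬(1 ≤ k + 1 ∧ t ∈ Set.Icc (tm (k+1)) (tp (k+1))) from
          fun h => hmem h.2), add_zero]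
        split
        · next h => exact absurd (hsubW k (k+1) h.1 (by omega) hk h.2) hmem
        · rfl
  have hpnn : ∀ i, 1 ≤ i → i ≤ N → ∀ t, 0 ≤ p i t := by
    intro i h1 h2 t
    rw [hp i (Finset.mem_Icc.2 ⟨h1, h2⟩) t]
    split
    · next hmem =>
      rw [hρ i (Finset.mem_Icc.2 ⟨h1, h2⟩), hPsum (i-1) (by omega) t]
      split
      · next hcase =>
        have hn := hnest (i-1) i hcase.1 (by omega) h2
        have := hdecr (tm i) (tm (i-1)) (hwin i h1 h2).1.le hn.1
          (hstrad (i-1) hcase.1 (by omega)).1.le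
        linarith
      · next =>
        have := hEin i h1 h2 t hmem
        linarith
    · exact le_rfl
  have hpbd : ∀ i, 1 ≤ i → i ≤ N → ∀ t, p i t ≤ s (tm i) := by
    intro i h1 h2 t
    have hsmn : 0 ≤ s (tm i) := hsnn _ (htmI i h1 h2)
    rw [hp i (Finset.mem_Icc.2 ⟨h1, h2⟩) t]
    split
    · next hmem =>
      rw [hρ i (Finset.mem_Icc.2 ⟨h1, h2⟩), hPsum (i-1) (by omega) t]
      have hst := hsnn t (hwinsub i h1 h2 hmem)
      split
      · next hcase =>
        have := hEin (i-1) hcase.1 (by omega) t hcase.2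
        have hsm1 : 0 ≤ s (tm (i-1)) := hsnn _ (htmI (i-1) hcase.1 (by omega))
        linarith
      · next => linarith
    · exact hsmn
  have hpdiff : ∀ i, 1 ≤ i → i ≤ N → ∀ t,
      p i t = (∑ j ∈ Finset.Icc 1 i, p j t) - (∑ j ∈ Finset.Icc 1 (i-1), p j t) := by
    intro i h1 h2 t
    obtain ⟨k, rfl⟩ : ∃ k, i = k + 1 := ⟨i - 1, by omega⟩
    rw [Finset.sum_Icc_succ_top (by omega : 1 ≤ k + 1)]
    simp only [Nat.add_sub_cancel]
    ring
  have hPmeas : ∀ i, i ≤ N → Measurable (fun t => ∑ j ∈ Finset.Icc 1 i, p j t) := by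
    intro i hi
    rcases Nat.eq_zero_or_pos i with rfl | h1
    · simpa using (measurable_const : Measurable (fun _ : ℝ => (0:ℝ)))
    · have heq : (fun t => ∑ j ∈ Finset.Icc 1 i, p j t) =
          (Set.Icc (tm i) (tp i)).indicator (fun t => s (tm i) - sc t) := by
        funext t
        rw [hPsum i hi t, Set.indicator_apply]
        by_cases hmem : t ∈ Set.Icc (tm i) (tp i)
        · rw [if_pos (⟨h1, hmem⟩ : 1 ≤ i ∧ _), if_pos hmem, hsc_eq t (hwinsub i h1 hi hmem)]
        · rw [if_neg (fun h => hmem h.2), if_neg hmem]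
      rw [heq]
      exact (measurable_const.sub hsc_cont.measurable).indicator measurableSet_Icc
  have hpmeas : ∀ i, 1 ≤ i → i ≤ N → Measurable (p i) := by
    intro i h1 h2
    have heq : p i = fun t => (∑ j ∈ Finset.Icc 1 i, p j t) - (∑ j ∈ Finset.Icc 1 (i-1), p j t) :=
      funext (hpdiff i h1 h2)
    rw [heq]
    exact (hPmeas i h2).sub (hPmeas (i-1) (by omega))
  have hqmeas : ∀ i, 1 ≤ i → i ≤ N → Measurable (q i) := by
    intro i h1 h2
    have heq : q i = (Set.Icc (tm i) (tp i)).indicator (fun _ => muhat N μ i) := by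
      funext t
      rw [hq i (Finset.mem_Icc.2 ⟨h1, h2⟩) t, Set.indicator_apply]
    rw [heq]
    exact measurable_const.indicator measurableSet_Icc
  have hqnn : ∀ i, 1 ≤ i → i ≤ N → ∀ t, 0 ≤ q i t := by
    intro i h1 h2 t
    rw [hq i (Finset.mem_Icc.2 ⟨h1, h2⟩) t]
    split
    · exact (hμh i h1 h2).le
    · exact le_rfl
  have hqle : ∀ i, 1 ≤ i → i ≤ N → ∀ t, q i t ≤ muhat N μ i := by
    intro i h1 h2 t
    rw [hq i (Finset.mem_Icc.2 ⟨h1, h2⟩) t]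
    split
    · exact le_rfl
    · exact (hμh i h1 h2).le
  have hqsupp : ∀ i, 1 ≤ i → i ≤ N → ∀ t, q i t ≠ 0 → t ∈ Set.Icc (tm i) (tp i) := by
    intro i h1 h2 t h
    by_contra hc
    rw [hq i (Finset.mem_Icc.2 ⟨h1, h2⟩) t, if_neg hc] at h
    exact h rfl
  have hpsupp : ∀ i, 1 ≤ i → i ≤ N → ∀ t, p i t ≠ 0 → t ∈ Set.Icc (tm i) (tp i) := by
    intro i h1 h2 t h
    by_contra hc
    rw [hp i (Finset.mem_Icc.2 ⟨h1, h2⟩) t, if_neg hc] at h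
    exact h rfl
  -- demand integral
  have hintq : ∀ i, 1 ≤ i → i ≤ N → ∫ t in (0:ℝ)..T, q i t = Q i := by
    intro i h1 h2
    obtain ⟨h0, hT', hlen, _⟩ := hwin i h1 h2
    have hqi : (fun t => q i t) = (Set.Icc (tm i) (tp i)).indicator (fun _ => muhat N μ i) := by
      funext t
      rw [hq i (Finset.mem_Icc.2 ⟨h1, h2⟩) t, Set.indicator_apply]
    rw [hqi, intervalIntegral.integral_of_le hT0.le, setIntegral_indicator measurableSet_Icc]
    have hsub : Set.Icc (tm i) (tp i) ⊆ Set.Ioc 0 T :=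
      fun x hx => ⟨lt_of_lt_of_le h0 hx.1, le_trans hx.2 hT'.le⟩
    rw [Set.inter_eq_self_of_subset_right hsub, setIntegral_const,
      Real.volume_real_Icc_of_le (by linarith [hlt i h1 h2] : tm i ≤ tp i),
      smul_eq_mul, hlen, div_mul_cancel₀ _ (hμh i h1 h2).ne']
  -- capacity telescope
  have htel : ∀ i, 1 ≤ i → i ≤ N → ∑ j ∈ Finset.Icc i N, muhat N μ j = μ i := by
    have key : ∀ m i, 1 ≤ i → i ≤ N → N - i = m →
        ∑ j ∈ Finset.Icc i N, muhat N μ j = μ i := by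
      intro m
      induction m with
      | zero =>
        intro i h1 h2 hm
        have hiN : i = N := by omega
        rw [hiN, Finset.Icc_self, Finset.sum_singleton]
        unfold muhat
        rw [if_neg (lt_irrefl N)]
      | succ k ih =>
        intro i h1 h2 hm
        have hiN : i < N := by omega
        have hins : Finset.Icc i N = insert i (Finset.Icc (i+1) N) := by
          ext x
          simp only [Finset.mem_Icc, Finset.mem_insert]
          omega
        rw [hins, Finset.sum_insert (by simp only [Finset.mem_Icc]; omega),
          ih (i+1) (by omega) (by omega) (by omega)]
        unfold muhat
        rw [if_pos hiN]
        ring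
    exact fun i h1 h2 => key (N - i) i h1 h2 rfl
  have hqcap_le : ∀ i, 1 ≤ i → i ≤ N → ∀ t, ∑ j ∈ Finset.Icc i N, q j t ≤ μ i := by
    intro i h1 h2 t
    calc ∑ j ∈ Finset.Icc i N, q j t ≤ ∑ j ∈ Finset.Icc i N, muhat N μ j := by
          refine Finset.sum_le_sum fun j hj => ?_
          rw [Finset.mem_Icc] at hj
          exact hqle j (by omega) hj.2 t
      _ = μ i := htel i h1 h2
  have hqcap_eq : ∀ i, 1 ≤ i → i ≤ N → ∀ t ∈ Set.Icc (tm i) (tp i),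
      ∑ j ∈ Finset.Icc i N, q j t = μ i := by
    intro i h1 h2 t ht
    rw [← htel i h1 h2]
    refine Finset.sum_congr rfl fun j hj => ?_
    rw [Finset.mem_Icc] at hj
    rw [hq j (Finset.mem_Icc.2 ⟨by omega, hj.2⟩) t, if_pos (hsubW i j h1 hj.1 hj.2 ht)]
  -- (E1)
  have hE1 : ∀ i, 1 ≤ i → i ≤ N → ∀ t ∈ Set.Icc (0:ℝ) T,
      ρ i ≤ s t + c i + ∑ j ∈ Finset.Icc 1 i, p j t ∧
      (t ∈ Set.Icc (tm i) (tp i) → s t + c i + ∑ j ∈ Finset.Icc 1 i, p j t = ρ i) := by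
    intro i h1 h2 t ht
    rw [hPsum i h2 t, hρ i (Finset.mem_Icc.2 ⟨h1, h2⟩)]
    constructor
    · split
      · next h => linarith
      · next h =>
        have hout : t ∉ Set.Icc (tm i) (tp i) := fun hm => h ⟨h1, hm⟩
        have := hEout i h1 h2 t ht hout
        linarith
    · intro hm
      rw [if_pos ⟨h1, hm⟩]
      ring
  -- bound for s on [0, T]
  obtain ⟨Cs, hsB⟩ : ∃ C : ℝ, ∀ t ∈ Set.Icc (0:ℝ) T, |s t| ≤ C := by
    obtain ⟨C, hC⟩ := isCompact_Icc.exists_bound_of_continuousOn hscont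
    exact ⟨C, fun t ht => by simpa [Real.norm_eq_abs] using hC t ht⟩
  -- measurability on the restricted measure, and interval integrability
  have hsaesm : AEStronglyMeasurable s (volume.restrict (Set.Ioc 0 T)) := by
    refine hsc_cont.measurable.aestronglyMeasurable.congr ?_
    exact (ae_restrict_iff' measurableSet_Ioc).2
      (ae_of_all _ fun t ht => hsc_eq t (Set.Ioc_subset_Icc_self ht))
  have hpB : ∀ i, 1 ≤ i → i ≤ N → ∀ t ∈ Set.Ioc (0:ℝ) T, |p i t| ≤ s (tm i) := by
    intro i h1 h2 t _
    rw [abs_of_nonneg (hpnn i h1 h2 t)]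
    exact hpbd i h1 h2 t
  have hqB : ∀ i, 1 ≤ i → i ≤ N → ∀ t ∈ Set.Ioc (0:ℝ) T, |q i t| ≤ muhat N μ i := by
    intro i h1 h2 t _
    rw [abs_of_nonneg (hqnn i h1 h2 t)]
    exact hqle i h1 h2 t
  have hPB : ∀ i, 1 ≤ i → i ≤ N → ∀ t ∈ Set.Ioc (0:ℝ) T,
      |∑ j ∈ Finset.Icc 1 i, p j t| ≤ s (tm i) := by
    intro i h1 h2 t _
    rw [hPsum i h2 t]
    split
    · next h =>
      have h3 := hEin i h1 h2 t h.2
      have h4 := hsnn t (hwinsub i h1 h2 h.2)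
      rw [abs_of_nonneg (by linarith)]
      linarith
    · next =>
      simpa using hsnn _ (htmI i h1 h2)
  have hp_int : ∀ i, 1 ≤ i → i ≤ N → IntervalIntegrable (p i) volume 0 T :=
    fun i h1 h2 => auxII hT0.le (s (tm i)) (hpmeas i h1 h2).aestronglyMeasurable (hpB i h1 h2)
  have hq_int : ∀ i, 1 ≤ i → i ≤ N → IntervalIntegrable (q i) volume 0 T :=
    fun i h1 h2 => auxII hT0.le (muhat N μ i) (hqmeas i h1 h2).aestronglyMeasurable (hqB i h1 h2)
  refine ⟨?_, ⟨?_, ?_, ?_, ?_, ?_, ?_⟩, ?_⟩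
  · -- nonnegative prices
    intro i hi t _
    rw [Finset.mem_Icc] at hi
    exact hpnn i hi.1 hi.2 t
  · -- measurability
    intro i hi
    rw [Finset.mem_Icc] at hi
    exact ⟨hqmeas i hi.1 hi.2, hpmeas i hi.1 hi.2⟩
  · -- boundedness
    intro i hi
    rw [Finset.mem_Icc] at hi
    exact ⟨max (muhat N μ i) (s (tm i)), fun t _ =>
      ⟨(hqle i hi.1 hi.2 t).trans (le_max_left _ _),
       (hpbd i hi.1 hi.2 t).trans (le_max_right _ _)⟩⟩
  · -- nonnegativity
    intro i hi t _
    rw [Finset.mem_Icc] at hi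
    exact ⟨hqnn i hi.1 hi.2 t, hpnn i hi.1 hi.2 t⟩
  · -- (E1)
    intro i hi t ht
    rw [Finset.mem_Icc] at hi
    refine ⟨(hE1 i hi.1 hi.2 t ht).1, fun hq0 => ?_⟩
    exact (hE1 i hi.1 hi.2 t ht).2 (hqsupp i hi.1 hi.2 t hq0.ne')
  · -- (E2)
    intro i hi t _
    rw [Finset.mem_Icc] at hi
    refine ⟨hqcap_le i hi.1 hi.2 t, fun hp0 => ?_⟩
    exact hqcap_eq i hi.1 hi.2 t (hpsupp i hi.1 hi.2 t hp0.ne')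
  · -- (E3)
    intro i hi
    rw [Finset.mem_Icc] at hi
    exact hintq i hi.1 hi.2
  -- optimality
  intro r hr
  obtain ⟨hrmeas, hrbd, hrnn, hrcap, hrint⟩ := hr
  have hrM : ∀ i, ∃ M : ℝ, ∀ t ∈ Set.Ioc (0:ℝ) T, 1 ≤ i → i ≤ N → |r i t| ≤ M := by
    intro i
    by_cases h : 1 ≤ i ∧ i ≤ N
    · obtain ⟨M, hMM⟩ := hrbd i (Finset.mem_Icc.2 h)
      refine ⟨M, fun t ht _ _ => ?_⟩
      rw [abs_of_nonneg (hrnn i (Finset.mem_Icc.2 h) t (Set.Ioc_subset_Icc_self ht))]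
      exact hMM t (Set.Ioc_subset_Icc_self ht)
    · exact ⟨0, fun t _ h1 h2 => absurd ⟨h1, h2⟩ h⟩
  choose M hM using hrM
  have hr_asm : ∀ i, 1 ≤ i → i ≤ N →
      AEStronglyMeasurable (r i) (volume.restrict (Set.Ioc 0 T)) :=
    fun i h1 h2 => (hrmeas i (Finset.mem_Icc.2 ⟨h1, h2⟩)).aestronglyMeasurable
  have hr_int : ∀ i, 1 ≤ i → i ≤ N → IntervalIntegrable (r i) volume 0 T :=
    fun i h1 h2 => auxII hT0.le (M i) (hr_asm i h1 h2) (fun t ht => hM i t ht h1 h2)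
  have swap_cond : ∀ x y : ℕ, x ∈ Finset.Icc 1 N ∧ y ∈ Finset.Icc 1 x ↔
      x ∈ Finset.Icc y N ∧ y ∈ Finset.Icc 1 N := by
    intro x y
    simp only [Finset.mem_Icc]
    omega
  -- closed form for the social cost of q
  have key_q : ∀ i, 1 ≤ i → i ≤ N → ∫ t in (0:ℝ)..T, (s t + c i) * q i t
      = ρ i * Q i - ∑ j ∈ Finset.Icc 1 i, ∫ t in (0:ℝ)..T, p j t * q i t := by
    intro i h1 h2
    have hfe : (fun t => (s t + c i) * q i t)
        = fun t => ρ i * q i t - (∑ j ∈ Finset.Icc 1 i, p j t) * q i t := by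
      funext t
      by_cases hmem : t ∈ Set.Icc (tm i) (tp i)
      · have he : s t + c i + ∑ j ∈ Finset.Icc 1 i, p j t = ρ i := by
          rw [hPsum i h2 t, if_pos ⟨h1, hmem⟩, hρ i (Finset.mem_Icc.2 ⟨h1, h2⟩)]
          ring
        linear_combination q i t * he
      · rw [hq i (Finset.mem_Icc.2 ⟨h1, h2⟩) t, if_neg hmem]
        ring
    rw [hfe, intervalIntegral.integral_sub ((hq_int i h1 h2).const_mul (ρ i))
        (auxProd hT0.le (hPmeas i h2).aestronglyMeasurable
          (hqmeas i h1 h2).aestronglyMeasurable (hPB i h1 h2) (hqB i h1 h2)),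
      intervalIntegral.integral_const_mul, hintq i h1 h2]
    congr 1
    have hconv : (fun t => (∑ j ∈ Finset.Icc 1 i, p j t) * q i t)
        = fun t => ∑ j ∈ Finset.Icc 1 i, p j t * q i t := by
      funext t
      rw [Finset.sum_mul]
    rw [hconv, intervalIntegral.integral_finset_sum]
    intro j hj
    rw [Finset.mem_Icc] at hj
    exact auxProd hT0.le (hpmeas j hj.1 (by omega)).aestronglyMeasurable
      (hqmeas i h1 h2).aestronglyMeasurable (hpB j hj.1 (by omega)) (hqB i h1 h2)
  have hsum_q : (∑ i ∈ Finset.Icc 1 N, ∫ t in (0:ℝ)..T, (s t + c i) * q i t)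
      = (∑ i ∈ Finset.Icc 1 N, ρ i * Q i)
        - ∑ j ∈ Finset.Icc 1 N, ∫ t in (0:ℝ)..T, μ j * p j t := by
    have h1 : (∑ i ∈ Finset.Icc 1 N, ∫ t in (0:ℝ)..T, (s t + c i) * q i t)
        = ∑ i ∈ Finset.Icc 1 N,
            (ρ i * Q i - ∑ j ∈ Finset.Icc 1 i, ∫ t in (0:ℝ)..T, p j t * q i t) := by
      refine Finset.sum_congr rfl fun i hi => ?_
      rw [Finset.mem_Icc] at hi
      exact key_q i hi.1 hi.2
    rw [h1, Finset.sum_sub_distrib]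
    congr 1
    rw [Finset.sum_comm' swap_cond]
    refine Finset.sum_congr rfl fun j hj => ?_
    rw [Finset.mem_Icc] at hj
    rw [← intervalIntegral.integral_finset_sum (fun i hi => by
      rw [Finset.mem_Icc] at hi
      exact auxProd hT0.le (hpmeas j hj.1 hj.2).aestronglyMeasurable
        (hqmeas i (by omega) hi.2).aestronglyMeasurable (hpB j hj.1 hj.2)
        (hqB i (by omega) hi.2))]
    congr 1
    funext t
    rw [← Finset.mul_sum]
    rcases (hpnn j hj.1 hj.2 t).eq_or_lt with h | h
    · rw [← h]
      ring
    · rw [hqcap_eq j hj.1 hj.2 t (hpsupp j hj.1 hj.2 t h.ne'), mul_comm]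
  -- lower bound for the social cost of r
  have key_r : ∀ i, 1 ≤ i → i ≤ N →
      ρ i * Q i - (∑ j ∈ Finset.Icc 1 i, ∫ t in (0:ℝ)..T, p j t * r i t)
      ≤ ∫ t in (0:ℝ)..T, (s t + c i) * r i t := by
    intro i h1 h2
    have himem := Finset.mem_Icc.2 ⟨h1, h2⟩
    have int_r := hr_int i h1 h2
    have int_Pr : IntervalIntegrable
        (fun t => (∑ j ∈ Finset.Icc 1 i, p j t) * r i t) volume 0 T :=
      auxProd hT0.le (hPmeas i h2).aestronglyMeasurable (hr_asm i h1 h2)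
        (hPB i h1 h2) (fun t ht => hM i t ht h1 h2)
    have int_scr : IntervalIntegrable (fun t => (s t + c i) * r i t) volume 0 T := by
      refine auxProd hT0.le (hsaesm.add aestronglyMeasurable_const) (hr_asm i h1 h2)
        (Cf := Cs + c i) (fun t ht => ?_) (fun t ht => hM i t ht h1 h2)
      have h3 := hsB t (Set.Ioc_subset_Icc_self ht)
      have h4 := hsnn t (Set.Ioc_subset_Icc_self ht)
      have h5 := hcnn i h1 h2
      rw [abs_of_nonneg (by linarith)]
      rw [abs_of_nonneg h4] at h3
      linarith
    have hmono : (∫ t in (0:ℝ)..T,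
          (ρ i * r i t - (∑ j ∈ Finset.Icc 1 i, p j t) * r i t))
        ≤ ∫ t in (0:ℝ)..T, (s t + c i) * r i t := by
      refine intervalIntegral.integral_mono_on hT0.le
        ((int_r.const_mul (ρ i)).sub int_Pr) int_scr ?_
      intro x hx
      have hE := (hE1 i h1 h2 x hx).1
      have hrx := hrnn i himem x hx
      calc ρ i * r i x - (∑ j ∈ Finset.Icc 1 i, p j x) * r i x
          = (ρ i - ∑ j ∈ Finset.Icc 1 i, p j x) * r i x := by ring
        _ ≤ (s x + c i) * r i x := mul_le_mul_of_nonneg_right (by linarith) hrx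
    rw [intervalIntegral.integral_sub (int_r.const_mul (ρ i)) int_Pr,
      intervalIntegral.integral_const_mul, hrint i himem] at hmono
    have hconv : (fun t => (∑ j ∈ Finset.Icc 1 i, p j t) * r i t)
        = fun t => ∑ j ∈ Finset.Icc 1 i, p j t * r i t := by
      funext t
      rw [Finset.sum_mul]
    rw [hconv, intervalIntegral.integral_finset_sum (fun j hj => by
      rw [Finset.mem_Icc] at hj
      exact auxProd hT0.le (hpmeas j hj.1 (by omega)).aestronglyMeasurable
        (hr_asm i h1 h2) (hpB j hj.1 (by omega)) (fun t ht => hM i t ht h1 h2))] at hmono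
    exact hmono
  -- put everything together
  calc (∑ i ∈ Finset.Icc 1 N, ∫ t in (0:ℝ)..T, (s t + c i) * q i t)
      = (∑ i ∈ Finset.Icc 1 N, ρ i * Q i)
        - ∑ j ∈ Finset.Icc 1 N, ∫ t in (0:ℝ)..T, μ j * p j t := hsum_q
    _ ≤ ∑ i ∈ Finset.Icc 1 N,
          (ρ i * Q i - ∑ j ∈ Finset.Icc 1 i, ∫ t in (0:ℝ)..T, p j t * r i t) := by
        rw [Finset.sum_sub_distrib]
        refine sub_le_sub_left ?_ _
        rw [Finset.sum_comm' swap_cond]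
        refine Finset.sum_le_sum fun j hj => ?_
        rw [Finset.mem_Icc] at hj
        have int_pr : ∀ i ∈ Finset.Icc j N,
            IntervalIntegrable (fun t => p j t * r i t) volume 0 T := by
          intro i hi
          rw [Finset.mem_Icc] at hi
          exact auxProd hT0.le (hpmeas j hj.1 hj.2).aestronglyMeasurable
            (hr_asm i (by omega) hi.2) (hpB j hj.1 hj.2)
            (fun t ht => hM i t ht (by omega) hi.2)
        rw [← intervalIntegral.integral_finset_sum int_pr]
        have heq2 : (fun t => ∑ i ∈ Finset.Icc j N, p j t * r i t)
            = fun t => p j t * ∑ i ∈ Finset.Icc j N, r i t := by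
          funext t
          rw [← Finset.mul_sum]
        rw [heq2]
        have int_pSr : IntervalIntegrable
            (fun t => p j t * ∑ i ∈ Finset.Icc j N, r i t) volume 0 T := by
          refine auxProd hT0.le (hpmeas j hj.1 hj.2).aestronglyMeasurable
            ((Finset.measurable_sum _ (fun i hi => by
              rw [Finset.mem_Icc] at hi
              exact hrmeas i (Finset.mem_Icc.2 ⟨by omega, hi.2⟩))).aestronglyMeasurable)
            (hpB j hj.1 hj.2) (Cg := μ j) (fun t ht => ?_)
          have htI := Set.Ioc_subset_Icc_self ht
          rw [abs_of_nonneg (Finset.sum_nonneg fun i hi => by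
            rw [Finset.mem_Icc] at hi
            exact hrnn i (Finset.mem_Icc.2 ⟨by omega, hi.2⟩) t htI)]
          exact hrcap j (Finset.mem_Icc.2 ⟨hj.1, hj.2⟩) t htI
        refine intervalIntegral.integral_mono_on hT0.le int_pSr
          ((hp_int j hj.1 hj.2).const_mul (μ j)) ?_
        intro x hx
        calc p j x * ∑ i ∈ Finset.Icc j N, r i x
            ≤ p j x * μ j :=
              mul_le_mul_of_nonneg_left (hrcap j (Finset.mem_Icc.2 ⟨hj.1, hj.2⟩) x hx)
                (hpnn j hj.1 hj.2 x)
          _ = μ j * p j x := mul_comm _ _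
    _ ≤ ∑ i ∈ Finset.Icc 1 N, ∫ t in (0:ℝ)..T, (s t + c i) * r i t := by
        refine Finset.sum_le_sum fun i hi => ?_
        rw [Finset.mem_Icc] at hi
        exact key_r i hi.1 hi.2
end
end

section
/- (First-best pricing achieves system optimum with Pareto improvement.) In the reduced morning-commute corridor network, let (q_i^E, w_i^E, ρ_i^E) be a DUE whose queuing delays equal the DSO prices, w_i^E = p_i (such a DUE exists when −1 ≤ s'(t) on 𝒯_N and s'(t) ≤ μ_i/μ_{i+1} − 1 on 𝒯_i \ 𝒯_{i−1} for all i < N). Then imposing dynamic prices p_i = w_i^E on every bottleneck yields the pricing equilibrium (q_i, p_i, ρ_i): the resulting flow pattern (q_i) minimizes the social transport cost Σ_{i=1}^{N} ∫_0^T (s(t)+c_i)·r_i(t) dt over all feasible flow patterns (r_i), and ρ_i = ρ_i^E for every i, so no commuter's equilibrium commuting cost increases (a Pareto improvement). -/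
open MeasureTheory Finset Set
open scoped Classical

noncomputable section

/-- `s` is continuously differentiable on `[0,td]` and on `[td,T]`,
with derivative `s'`. -/
def PiecewiseC1 (T td : ℝ) (s s' : ℝ → ℝ) : Prop :=
  (∀ t ∈ Set.Icc (0:ℝ) T, t ≠ td → HasDerivAt s (s' t) t) ∧
  ContinuousOn s' (Set.Icc 0 td) ∧ ContinuousOn s' (Set.Icc td T)

/-- Dynamic user equilibrium for the morning commute: bounded measurable
nonnegative arrival flows `qE`, piecewise continuously differentiable
nonnegative queuing delays `wE`, constants `ρE`, satisfying (D1), (D2), (D3),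
where `σ_i^E(t) = t − Σ_{j=1}^{i−1} wE_j(t) − c_i`. -/
def IsMorningDUE (N : ℕ) (T : ℝ) (μ Q c : ℕ → ℝ) (s : ℝ → ℝ)
    (qE wE : ℕ → ℝ → ℝ) (ρE : ℕ → ℝ) : Prop :=
  (∀ i ∈ Finset.Icc 1 N, Measurable (qE i)) ∧
  (∀ i ∈ Finset.Icc 1 N, ∃ M : ℝ, ∀ t ∈ Set.Icc (0:ℝ) T, qE i t ≤ M) ∧
  (∀ i ∈ Finset.Icc 1 N, ∀ t ∈ Set.Icc (0:ℝ) T, 0 ≤ qE i t ∧ 0 ≤ wE i t) ∧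
  (∀ i ∈ Finset.Icc 1 N, ContinuousOn (wE i) (Set.Icc 0 T) ∧
    ∃ F : Finset ℝ, ∀ t ∈ Set.Icc (0:ℝ) T, t ∉ F → DifferentiableAt ℝ (wE i) t) ∧
  (∀ i ∈ Finset.Icc 1 N, ∀ t ∈ Set.Icc (0:ℝ) T,
    ρE i ≤ s t + c i + ∑ j ∈ Finset.Icc 1 i, wE j t ∧
    (0 < qE i t → s t + c i + ∑ j ∈ Finset.Icc 1 i, wE j t = ρE i)) ∧
  (∀ i ∈ Finset.Icc 1 N, ∫ t in (0:ℝ)..T, qE i t = Q i) ∧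
  (∀ i ∈ Finset.Icc 1 N, ∀ t ∈ Set.Icc (0:ℝ) T,
    (∑ j ∈ Finset.Icc i N, qE j t) ≤
      μ i * deriv (fun u => u - (∑ j ∈ Finset.Icc 1 (i - 1), wE j u) - c i) t ∧
    (0 < wE i t → (∑ j ∈ Finset.Icc i N, qE j t) =
      μ i * deriv (fun u => u - (∑ j ∈ Finset.Icc 1 (i - 1), wE j u) - c i) t))

/-- first-best pricing achieves system optimum with Pareto
improvement: imposing prices equal to the DUE queuing delays yields the
pricing equilibrium, whose flow pattern minimizes the social transport cost,
and equilibrium commuting costs are unchanged. -/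
theorem stmt14 (N : ℕ) (T td : ℝ) (μ Q c : ℕ → ℝ) (s s' : ℝ → ℝ)
    (tm tp : ℕ → ℝ) (q p : ℕ → ℝ → ℝ) (ρ : ℕ → ℝ)
    (qE wE : ℕ → ℝ → ℝ) (ρE : ℕ → ℝ)
    (hnet : CorridorNet N T td μ Q c s)
    (hred : ReducedNet N T μ Q s tm tp)
    (hdso : ExplicitDSO N μ c s tm tp q p ρ)
    (hs' : PiecewiseC1 T td s s')
    (hdue : IsMorningDUE N T μ Q c s qE wE ρE)
    (hwp : ∀ i ∈ Finset.Icc 1 N, ∀ t ∈ Set.Icc (0:ℝ) T, wE i t = p i t)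
    :
    IsPricingEq N T μ Q c s q p ρ ∧
    (∀ r : ℕ → ℝ → ℝ, FeasibleFlow N T μ Q r →
      (∑ i ∈ Finset.Icc 1 N, ∫ t in (0:ℝ)..T, (s t + c i) * q i t) ≤
      (∑ i ∈ Finset.Icc 1 N, ∫ t in (0:ℝ)..T, (s t + c i) * r i t)) ∧
    (∀ i ∈ Finset.Icc 1 N, ρ i = ρE i) := by
  classical
  obtain ⟨hN, hT, ⟨htd0, htdT⟩, hμQc, hscont, hsnn, hstd, hsqc⟩ := hnet
  obtain ⟨hμdec, hμN, hTinc, hwin⟩ := hred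
  obtain ⟨hq, hρ, hp⟩ := hdso
  have hQpos : ∀ i, 1 ≤ i → i ≤ N → 0 < Q i :=
    fun i h1 h2 => (hμQc i (Finset.mem_Icc.2 ⟨h1, h2⟩)).2.1
  have hμpos : ∀ i, 1 ≤ i → i ≤ N → 0 < μ i :=
    fun i h1 h2 => (hμQc i (Finset.mem_Icc.2 ⟨h1, h2⟩)).1
  have hmuh : ∀ i, 1 ≤ i → i ≤ N → 0 < muhat N μ i := by
    intro i h1 h2
    by_cases h : i < N
    · simpa [muhat, h] using sub_pos.2 (hμdec i h1 h)
    · have hiN : i = N := by omega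
      simpa [muhat, h, hiN] using hμN
  -- strict monotonicity of s on each side of td
  have sL : ∀ a b : ℝ, 0 ≤ a → a < b → b ≤ td → s b < s a := by
    intro a b ha hab hbtd
    have haT : a ∈ Set.Icc (0:ℝ) T := ⟨ha, by linarith⟩
    have htdm : td ∈ Set.Icc (0:ℝ) T := ⟨htd0.le, htdT.le⟩
    rcases eq_or_lt_of_le hbtd with rfl | hblt
    · -- b = td : show s td < s a, i.e. 0 < s a
      rw [hstd]
      by_contra hle
      push_neg at hle
      have hsa : s a = 0 := le_antisymm hle (hsnn a haT)
      have hm := hsqc a haT b htdm (by linarith) (1/2) ⟨by norm_num, by norm_num⟩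
      have hmem : (1/2 : ℝ) * a + (1 - 1/2) * b ∈ Set.Icc (0:ℝ) T := by
        constructor <;> nlinarith
      have := hsnn _ hmem
      rw [hsa, hstd] at hm
      simp only [max_self] at hm
      linarith
    · set l := (td - b)/(td - a) with hl
      have h1 : 0 < td - a := by linarith
      have hl0 : 0 < l := div_pos (by linarith) h1
      have hl1 : l < 1 := (div_lt_one h1).2 (by linarith)
      have hb : l * a + (1 - l) * td = b := by
        rw [hl]
        field_simp
        ring
      have hq := hsqc a haT td htdm (by linarith) l ⟨hl0, hl1⟩
      rw [hb, hstd] at hq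
      have hsa : 0 ≤ s a := hsnn a haT
      calc s b < max (s a) 0 := hq
        _ = s a := max_eq_left hsa
  have sR : ∀ a b : ℝ, td ≤ a → a < b → b ≤ T → s a < s b := by
    intro a b hatd hab hbT
    have hbm : b ∈ Set.Icc (0:ℝ) T := ⟨by linarith, hbT⟩
    have htdm : td ∈ Set.Icc (0:ℝ) T := ⟨htd0.le, htdT.le⟩
    rcases eq_or_lt_of_le hatd with h | halt
    · -- td = a : show s a < s b, i.e. 0 < s b
      rw [← h, hstd]
      by_contra hle
      push_neg at hle
      have hsb : s b = 0 := le_antisymm hle (hsnn b hbm)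
      have hm := hsqc b hbm td htdm (by linarith) (1/2) ⟨by norm_num, by norm_num⟩
      have hmem : (1/2 : ℝ) * b + (1 - 1/2) * td ∈ Set.Icc (0:ℝ) T := by
        constructor <;> nlinarith
      have := hsnn _ hmem
      rw [hsb, hstd] at hm
      simp only [max_self] at hm
      linarith
    · set l := (a - td)/(b - td) with hl
      have h1 : 0 < b - td := by linarith
      have hl0 : 0 < l := div_pos (by linarith) h1
      have hl1 : l < 1 := (div_lt_one h1).2 (by linarith)
      have ha' : l * b + (1 - l) * td = a := by
        rw [hl]
        field_simp
        ring
      have hq := hsqc b hbm td htdm (by linarith) l ⟨hl0, hl1⟩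
      rw [ha', hstd] at hq
      have hsb : 0 ≤ s b := hsnn b hbm
      calc s a < max (s b) 0 := hq
        _ = s b := max_eq_left hsb
  have hwin' : ∀ i, 1 ≤ i → i ≤ N →
      0 < tm i ∧ tp i < T ∧ tp i - tm i = Q i / muhat N μ i ∧ s (tm i) = s (tp i) :=
    fun i h1 h2 => hwin i (Finset.mem_Icc.2 ⟨h1, h2⟩)
  have hlt : ∀ i, 1 ≤ i → i ≤ N → tm i < tp i := by
    intro i h1 h2
    have h := (hwin' i h1 h2).2.2.1
    have := div_pos (hQpos i h1 h2) (hmuh i h1 h2)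
    linarith
  have hstrad : ∀ i, 1 ≤ i → i ≤ N → tm i < td ∧ td < tp i := by
    intro i h1 h2
    obtain ⟨h0, hTT, _, hsym⟩ := hwin' i h1 h2
    have hltm := hlt i h1 h2
    constructor
    · by_contra hc
      push_neg at hc
      have := sR (tm i) (tp i) hc hltm hTT.le
      linarith
    · by_contra hc
      push_neg at hc
      have := sL (tm i) (tp i) h0.le hltm hc
      linarith
  have hadj : ∀ i, 1 ≤ i → i < N → tm (i+1) < tm i ∧ tp i < tp (i+1) := by
    intro i h1 hiN
    have h2 : i ≤ N := hiN.le
    have h1' : 1 ≤ i + 1 := by omega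
    have h2' : i + 1 ≤ N := hiN
    obtain ⟨h0i, hTi, hleni, hsymi⟩ := hwin' i h1 h2
    obtain ⟨h0i', hTi', hleni', hsymi'⟩ := hwin' (i+1) h1' h2'
    obtain ⟨hstr1, hstr2⟩ := hstrad i h1 h2
    obtain ⟨hstr1', hstr2'⟩ := hstrad (i+1) h1' h2'
    have hLL : tp i - tm i < tp (i+1) - tm (i+1) := by
      rw [hleni, hleni']
      exact hTinc i h1 hiN
    constructor
    · by_contra hc
      push_neg at hc
      have hA : s (tm (i+1)) ≤ s (tm i) := by
        rcases eq_or_lt_of_le hc with h | h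
        · exact (congrArg s h).ge
        · exact (sL (tm i) (tm (i+1)) h0i.le h hstr1'.le).le
      have hB : tp (i+1) ≤ tp i := by
        by_contra hc2
        push_neg at hc2
        have := sR (tp i) (tp (i+1)) hstr2.le hc2 hTi'.le
        rw [← hsymi, ← hsymi'] at this
        linarith
      linarith
    · by_contra hc
      push_neg at hc
      have hA : s (tp (i+1)) ≤ s (tp i) := by
        rcases eq_or_lt_of_le hc with h | h
        · exact (congrArg s h).le
        · exact (sR (tp (i+1)) (tp i) hstr2'.le h hTi.le).le
      have hB : tm i ≤ tm (i+1) := by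
        by_contra hc2
        push_neg at hc2
        have := sL (tm (i+1)) (tm i) h0i'.le hc2 hstr1.le
        rw [hsymi, hsymi'] at this
        linarith
      linarith
  have hnest : ∀ i, 1 ≤ i → ∀ j, i ≤ j → j ≤ N → tm j ≤ tm i ∧ tp i ≤ tp j := by
    intro i h1
    refine Nat.le_induction ?_ ?_
    · intro _
      exact ⟨le_rfl, le_rfl⟩
    · intro j hij ih hjN
      have hadj' := hadj j (by omega) (by omega)
      have h := ih (by omega)
      exact ⟨le_trans hadj'.1.le h.1, le_trans h.2 hadj'.2.le⟩
  have hstmadj : ∀ i, 1 ≤ i → i < N → s (tm i) < s (tm (i+1)) := by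
    intro i h1 hiN
    have h := hadj i h1 hiN
    have hstr := hstrad i h1 hiN.le
    exact sL (tm (i+1)) (tm i) (hwin' (i+1) (by omega) hiN).1.le h.1 hstr.1.le
  have hsle : ∀ i, 1 ≤ i → i ≤ N → ∀ t, tm i ≤ t → t ≤ tp i → s t ≤ s (tm i) := by
    intro i h1 h2 t ht1 ht2
    obtain ⟨h0, hTT, _, hsym⟩ := hwin' i h1 h2
    rcases le_or_gt t td with h | h
    · rcases eq_or_lt_of_le ht1 with he | hlt'
      · exact (congrArg s he).ge
      · exact (sL (tm i) t h0.le hlt' h).le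
    · rw [hsym]
      rcases eq_or_lt_of_le ht2 with he | hlt'
      · exact (congrArg s he).le
      · exact (sR t (tp i) h.le hlt' hTT.le).le
  have hsgt : ∀ i, 1 ≤ i → i ≤ N → ∀ t, 0 ≤ t → t ≤ T →
      t ∉ Set.Icc (tm i) (tp i) → s (tm i) < s t := by
    intro i h1 h2 t ht0 htT hnot
    obtain ⟨h0, hTT, _, hsym⟩ := hwin' i h1 h2
    obtain ⟨hs1, hs2⟩ := hstrad i h1 h2
    rw [Set.mem_Icc, not_and_or, not_le, not_le] at hnot
    rcases hnot with h | h
    · exact sL t (tm i) ht0 h (by linarith)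
    · rw [hsym]
      exact sR (tp i) t (by linarith) h htT
  have hSform : ∀ i, 1 ≤ i → i ≤ N → ∀ t : ℝ,
      (∑ j ∈ Finset.Icc 1 i, p j t)
        = Set.indicator (Set.Icc (tm i) (tp i)) (fun u => s (tm i) - s u) t := by
    intro i h1
    induction i, h1 using Nat.le_induction with
    | base =>
      intro hiN t
      have hmem : 1 ∈ Finset.Icc 1 N := Finset.mem_Icc.2 ⟨le_rfl, hiN⟩
      rw [Finset.Icc_self, Finset.sum_singleton, hp 1 hmem t, hρ 1 hmem]
      have h0 : (Finset.Icc 1 0 : Finset ℕ) = ∅ := Finset.Icc_eq_empty (by omega)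
      by_cases ht : t ∈ Set.Icc (tm 1) (tp 1)
      · rw [if_pos ht, Set.indicator_of_mem ht, h0, Finset.sum_empty]
        ring
      · rw [if_neg ht, Set.indicator_of_notMem ht]
    | succ i hi ih =>
      intro hiN t
      have hiN' : i ≤ N := by omega
      have hmem : i + 1 ∈ Finset.Icc 1 N := Finset.mem_Icc.2 ⟨by omega, hiN⟩
      rw [Finset.sum_Icc_succ_top (by omega : 1 ≤ i + 1), hp (i+1) hmem t]
      by_cases ht : t ∈ Set.Icc (tm (i+1)) (tp (i+1))
      · rw [if_pos ht, Set.indicator_of_mem ht, hρ (i+1) hmem, Nat.add_sub_cancel]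
        ring
      · rw [if_neg ht, Set.indicator_of_notMem ht, ih hiN' t, add_zero]
        apply Set.indicator_of_notMem
        intro hmem'
        have hsub := hnest i (by omega) (i+1) (by omega) hiN
        exact ht ⟨le_trans hsub.1 hmem'.1, le_trans hmem'.2 hsub.2⟩
  have hpdiff : ∀ i, 1 ≤ i → ∀ t : ℝ,
      p i t = (∑ j ∈ Finset.Icc 1 i, p j t) - (∑ j ∈ Finset.Icc 1 (i-1), p j t) := by
    intro i h1 t
    obtain ⟨k, rfl⟩ : ∃ k, i = k + 1 := ⟨i - 1, by omega⟩
    rw [Finset.sum_Icc_succ_top (by omega : 1 ≤ k + 1), Nat.add_sub_cancel]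
    ring
  have hstmnn : ∀ i, 1 ≤ i → i ≤ N → 0 ≤ s (tm i) := by
    intro i h1 h2
    have h0 := hwin' i h1 h2
    exact hsnn _ ⟨h0.1.le, by linarith [h0.2.1, hlt i h1 h2]⟩
  have hpbound : ∀ i, 1 ≤ i → i ≤ N → ∀ t : ℝ, 0 ≤ p i t ∧ p i t ≤ max (s (tm i)) 0 := by
    intro i h1 h2 t
    have hmem : i ∈ Finset.Icc 1 N := Finset.mem_Icc.2 ⟨h1, h2⟩
    by_cases ht : t ∈ Set.Icc (tm i) (tp i)
    · have h0 := hwin' i h1 h2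
      have ht0 : 0 ≤ t := le_trans h0.1.le ht.1
      have htT : t ≤ T := le_trans ht.2 h0.2.1.le
      have hst : 0 ≤ s t := hsnn t ⟨ht0, htT⟩
      have hstm : 0 ≤ s (tm i) := hstmnn i h1 h2
      have hsle' : s t ≤ s (tm i) := hsle i h1 h2 t ht.1 ht.2
      have hmx : s (tm i) ≤ max (s (tm i)) 0 := le_max_left _ _
      rw [hpdiff i h1 t, hSform i h1 h2 t, Set.indicator_of_mem ht]
      rcases Nat.lt_or_ge i 2 with hi2 | hi2
      · have hieq : i = 1 := by omega
        subst hieq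
        have he : (Finset.Icc 1 0 : Finset ℕ) = ∅ := Finset.Icc_eq_empty (by omega)
        rw [he, Finset.sum_empty]
        constructor <;> linarith
      · have h1' : 1 ≤ i - 1 := by omega
        have h2' : i - 1 ≤ N := by omega
        rw [hSform (i-1) h1' h2' t]
        by_cases ht' : t ∈ Set.Icc (tm (i-1)) (tp (i-1))
        · rw [Set.indicator_of_mem ht']
          have hm : s (tm (i-1)) < s (tm i) := by
            have := hstmadj (i-1) h1' (by omega)
            rwa [Nat.sub_add_cancel (by omega)] at this
          have hstm' : 0 ≤ s (tm (i-1)) := hstmnn (i-1) h1' h2'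
          constructor <;> linarith
        · rw [Set.indicator_of_notMem ht']
          constructor <;> linarith
    · rw [hp i hmem t, if_neg ht]
      exact ⟨le_rfl, le_max_right _ _⟩
  have htel : ∀ k, 1 ≤ k → k ≤ N → (∑ j ∈ Finset.Icc k N, muhat N μ j) = μ k := by
    have key : ∀ d k, 1 ≤ k → k + d = N → (∑ j ∈ Finset.Icc k N, muhat N μ j) = μ k := by
      intro d
      induction d with
      | zero =>
        intro k h1 hk
        have : k = N := by omega
        subst this
        rw [Finset.Icc_self, Finset.sum_singleton]
        simp [muhat]
      | succ d ih =>
        intro k h1 hk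
        have hkN : k < N := by omega
        have hins : Finset.Icc k N = insert k (Finset.Icc (k+1) N) := by
          rw [show Finset.Icc (k+1) N = Finset.Ioc k N from Finset.Icc_add_one_left_eq_Ioc k N,
            Finset.Ioc_insert_left hkN.le]
        rw [hins, Finset.sum_insert (by simp), ih (k+1) (by omega) (by omega)]
        simp [muhat, hkN]
    intro k h1 h2
    exact key (N - k) k h1 (by omega)
  have hμmono : ∀ a, 1 ≤ a → ∀ b, a ≤ b → b ≤ N → μ b ≤ μ a := by
    intro a h1
    refine Nat.le_induction ?_ ?_
    · intro _
      exact le_rfl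
    · intro b hab ih hbN
      exact le_trans (hμdec b (by omega) (by omega)).le (ih (by omega))
  have hqval : ∀ i, 1 ≤ i → i ≤ N → ∀ t, q i t = if t ∈ Set.Icc (tm i) (tp i) then muhat N μ i else 0 :=
    fun i h1 h2 t => hq i (Finset.mem_Icc.2 ⟨h1, h2⟩) t
  have hqnn : ∀ i, 1 ≤ i → i ≤ N → ∀ t, 0 ≤ q i t := by
    intro i h1 h2 t
    rw [hqval i h1 h2 t]
    split
    · exact (hmuh i h1 h2).le
    · exact le_rfl
  -- capacity sums
  have hcap : ∀ i, 1 ≤ i → i ≤ N → ∀ t : ℝ,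
      (∑ j ∈ Finset.Icc i N, q j t) ≤ μ i ∧
      (t ∈ Set.Icc (tm i) (tp i) → (∑ j ∈ Finset.Icc i N, q j t) = μ i) := by
    intro i h1 h2 t
    by_cases hex : ∃ j, (i ≤ j ∧ j ≤ N) ∧ t ∈ Set.Icc (tm j) (tp j)
    · set k := Nat.find hex with hkdef
      have hkP := Nat.find_spec hex
      have hkmin : ∀ j, j < k → ¬ ((i ≤ j ∧ j ≤ N) ∧ t ∈ Set.Icc (tm j) (tp j)) :=
        fun j hj => Nat.find_min hex hj
      have hik : i ≤ k := hkP.1.1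
      have hkN : k ≤ N := hkP.1.2
      have hiff : ∀ j, i ≤ j → j ≤ N → (t ∈ Set.Icc (tm j) (tp j) ↔ k ≤ j) := by
        intro j hij hjN
        constructor
        · intro htj
          by_contra hc
          push_neg at hc
          exact hkmin j hc ⟨⟨hij, hjN⟩, htj⟩
        · intro hkj
          have hs := hnest k (by omega) j hkj hjN
          exact ⟨le_trans hs.1 hkP.2.1, le_trans hkP.2.2 hs.2⟩
      have hsum : (∑ j ∈ Finset.Icc i N, q j t) = μ k := by
        have hterm : ∀ j ∈ Finset.Icc i N, q j t = if k ≤ j then muhat N μ j else 0 := by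
          intro j hj
          rw [Finset.mem_Icc] at hj
          rw [hqval j (by omega) hj.2 t]
          by_cases hkj : k ≤ j
          · rw [if_pos ((hiff j hj.1 hj.2).2 hkj), if_pos hkj]
          · rw [if_neg (fun ht => hkj ((hiff j hj.1 hj.2).1 ht)), if_neg hkj]
        rw [Finset.sum_congr rfl hterm, ← Finset.sum_filter]
        rw [show (Finset.Icc i N).filter (fun j => k ≤ j) = Finset.Icc k N by
          ext j
          simp only [Finset.mem_filter, Finset.mem_Icc]
          omega]
        exact htel k (by omega) hkN
      constructor
      · rw [hsum]
        exact hμmono i h1 k hik hkN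
      · intro hti
        have hk_le : k ≤ i := by
          by_contra hc
          push_neg at hc
          exact hkmin i hc ⟨⟨le_rfl, h2⟩, hti⟩
        rw [hsum, le_antisymm hk_le hik]
    · have hz : ∀ j ∈ Finset.Icc i N, q j t = 0 := by
        intro j hj
        rw [Finset.mem_Icc] at hj
        rw [hqval j (by omega) hj.2 t, if_neg]
        intro ht
        exact hex ⟨j, hj, ht⟩
      rw [Finset.sum_eq_zero hz]
      exact ⟨(hμpos i h1 h2).le, fun hti => absurd ⟨i, ⟨le_rfl, h2⟩, hti⟩ hex⟩
  -- continuous global extension of s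
  set sproj : ℝ → ℝ := fun t => s (max 0 (min t T)) with hsprojdef
  have hprojmem : ∀ x : ℝ, max 0 (min x T) ∈ Set.Icc (0:ℝ) T :=
    fun x => ⟨le_max_left _ _, max_le hT.le (min_le_right _ _)⟩
  have hsprojcont : Continuous sproj :=
    hscont.comp_continuous (continuous_const.max (continuous_id.min continuous_const)) hprojmem
  have hsproj_eq : ∀ t : ℝ, 0 ≤ t → t ≤ T → sproj t = s t := by
    intro t h0 h1
    simp only [hsprojdef]
    rw [min_eq_left h1, max_eq_right h0]
  -- measurability
  have hqmeas : ∀ i, 1 ≤ i → i ≤ N → Measurable (q i) := by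
    intro i h1 h2
    have he : q i = Set.indicator (Set.Icc (tm i) (tp i)) (fun _ => muhat N μ i) := by
      funext t
      rw [hqval i h1 h2 t, Set.indicator_apply]
    rw [he]
    exact measurable_const.indicator measurableSet_Icc
  have hSmeas : ∀ i, i ≤ N → Measurable (fun t => ∑ j ∈ Finset.Icc 1 i, p j t) := by
    intro i h2
    rcases Nat.eq_zero_or_pos i with h | h
    · subst h
      have he : (Finset.Icc 1 0 : Finset ℕ) = ∅ := Finset.Icc_eq_empty (by omega)
      simp only [he, Finset.sum_empty]
      exact measurable_const
    · have he : (fun t => ∑ j ∈ Finset.Icc 1 i, p j t)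
          = Set.indicator (Set.Icc (tm i) (tp i)) (fun u => s (tm i) - sproj u) := by
        funext t
        rw [hSform i h h2 t]
        by_cases ht : t ∈ Set.Icc (tm i) (tp i)
        · rw [Set.indicator_of_mem ht, Set.indicator_of_mem ht]
          have h0 := hwin' i h h2
          rw [hsproj_eq t (le_trans h0.1.le ht.1) (le_trans ht.2 h0.2.1.le)]
        · rw [Set.indicator_of_notMem ht, Set.indicator_of_notMem ht]
      rw [he]
      exact (measurable_const.sub hsprojcont.measurable).indicator measurableSet_Icc
  have hpmeas : ∀ i, 1 ≤ i → i ≤ N → Measurable (p i) := by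
    intro i h1 h2
    have he : p i = fun t => (∑ j ∈ Finset.Icc 1 i, p j t) - (∑ j ∈ Finset.Icc 1 (i-1), p j t) :=
      funext (hpdiff i h1)
    rw [he]
    exact (hSmeas i h2).sub (hSmeas (i-1) (by omega))
  -- (E1)
  have hE1 : ∀ i, 1 ≤ i → i ≤ N → ∀ t, 0 ≤ t → t ≤ T →
      ρ i ≤ s t + c i + (∑ j ∈ Finset.Icc 1 i, p j t) ∧
      (t ∈ Set.Icc (tm i) (tp i) → s t + c i + (∑ j ∈ Finset.Icc 1 i, p j t) = ρ i) := by
    intro i h1 h2 t ht0 htT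
    have hmem : i ∈ Finset.Icc 1 N := Finset.mem_Icc.2 ⟨h1, h2⟩
    rw [hSform i h1 h2 t, hρ i hmem]
    by_cases ht : t ∈ Set.Icc (tm i) (tp i)
    · rw [Set.indicator_of_mem ht]
      exact ⟨le_of_eq (by ring), fun _ => by ring⟩
    · rw [Set.indicator_of_notMem ht]
      have := hsgt i h1 h2 t ht0 htT ht
      exact ⟨by linarith, fun h => absurd h ht⟩
  -- the pricing equilibrium
  have hPE : IsPricingEq N T μ Q c s q p ρ := by
    refine ⟨?_, ?_, ?_, ?_, ?_, ?_⟩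
    · intro i hi
      rw [Finset.mem_Icc] at hi
      exact ⟨hqmeas i hi.1 hi.2, hpmeas i hi.1 hi.2⟩
    · intro i hi
      rw [Finset.mem_Icc] at hi
      refine ⟨max (muhat N μ i) (max (s (tm i)) 0), fun t ht => ⟨?_, ?_⟩⟩
      · rw [hqval i hi.1 hi.2 t]
        split
        · exact le_max_left _ _
        · exact le_trans (le_max_right _ _) (le_max_right _ _)
      · exact le_trans (hpbound i hi.1 hi.2 t).2 (le_max_right _ _)
    · intro i hi t ht
      rw [Finset.mem_Icc] at hi
      exact ⟨hqnn i hi.1 hi.2 t, (hpbound i hi.1 hi.2 t).1⟩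
    · intro i hi t ht
      rw [Finset.mem_Icc] at hi
      obtain ⟨hA, hB⟩ := hE1 i hi.1 hi.2 t ht.1 ht.2
      refine ⟨hA, fun hq0 => ?_⟩
      apply hB
      by_contra hc
      rw [hqval i hi.1 hi.2 t, if_neg hc] at hq0
      exact lt_irrefl 0 hq0
    · intro i hi t ht
      rw [Finset.mem_Icc] at hi
      obtain ⟨hA, hB⟩ := hcap i hi.1 hi.2 t
      refine ⟨hA, fun hp0 => ?_⟩
      apply hB
      by_contra hc
      rw [hp i (Finset.mem_Icc.2 hi) t, if_neg hc] at hp0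
      exact lt_irrefl 0 hp0
    · intro i hi
      rw [Finset.mem_Icc] at hi
      obtain ⟨h0, hTT, hlen, _⟩ := hwin' i hi.1 hi.2
      have hIcc_sub : Set.Icc (tm i) (tp i) ⊆ Set.Ioc 0 T :=
        fun x hx => ⟨lt_of_lt_of_le h0 hx.1, le_trans hx.2 hTT.le⟩
      have heq : ∀ t ∈ Set.Ioc (0:ℝ) T,
          q i t = Set.indicator (Set.Icc (tm i) (tp i)) (fun _ => muhat N μ i) t := by
        intro t ht
        rw [hqval i hi.1 hi.2 t, Set.indicator_apply]
      rw [intervalIntegral.integral_of_le hT.le,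
        MeasureTheory.setIntegral_congr_fun measurableSet_Ioc (fun t ht => heq t ht),
        MeasureTheory.setIntegral_indicator measurableSet_Icc,
        Set.inter_eq_self_of_subset_right hIcc_sub,
        MeasureTheory.setIntegral_const, Real.volume_real_Icc_of_le (hlt i hi.1 hi.2).le,
        smul_eq_mul, hlen]
      exact div_mul_cancel₀ _ (hmuh i hi.1 hi.2).ne'
  -- ρ i = ρE i
  have hρeq : ∀ i ∈ Finset.Icc 1 N, ρ i = ρE i := by
    intro i hi
    have hi' := Finset.mem_Icc.1 hi
    have hD1 := hdue.2.2.2.2.1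
    have hD2 := hdue.2.2.2.2.2.1
    have hDnn := hdue.2.2.1
    have hQi : 0 < Q i := hQpos i hi'.1 hi'.2
    have hex : ∃ t, t ∈ Set.Icc (0:ℝ) T ∧ 0 < qE i t := by
      by_contra hc
      push_neg at hc
      have hzero : Set.EqOn (qE i) (fun _ => (0:ℝ)) (Set.uIcc (0:ℝ) T) := by
        intro t ht
        rw [Set.uIcc_of_le hT.le] at ht
        have h1 := (hDnn i hi t ht).1
        have h2 := hc t ht
        simp only
        linarith
      have h0 := intervalIntegral.integral_congr (μ := MeasureTheory.volume) hzero
      rw [hD2 i hi] at h0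
      simp only [intervalIntegral.integral_const, smul_zero] at h0
      linarith
    obtain ⟨t0, ht0, hq0⟩ := hex
    have hd1 := (hD1 i hi t0 ht0).2 hq0
    have hwE : ∀ j ∈ Finset.Icc 1 i, wE j t0 = p j t0 := by
      intro j hj
      rw [Finset.mem_Icc] at hj
      exact hwp j (Finset.mem_Icc.2 ⟨hj.1, le_trans hj.2 hi'.2⟩) t0 ht0
    rw [Finset.sum_congr rfl hwE] at hd1
    have hle1 : ρ i ≤ ρE i := by
      rw [← hd1]
      exact (hE1 i hi'.1 hi'.2 t0 ht0.1 ht0.2).1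
    have h0i := hwin' i hi'.1 hi'.2
    have htm_mem : tm i ∈ Set.Icc (0:ℝ) T :=
      ⟨h0i.1.le, by linarith [h0i.2.1, hlt i hi'.1 hi'.2]⟩
    have htmI : tm i ∈ Set.Icc (tm i) (tp i) := ⟨le_rfl, (hlt i hi'.1 hi'.2).le⟩
    have heq1 := (hE1 i hi'.1 hi'.2 (tm i) htm_mem.1 htm_mem.2).2 htmI
    have hd1' := (hD1 i hi (tm i) htm_mem).1
    have hwE' : ∀ j ∈ Finset.Icc 1 i, wE j (tm i) = p j (tm i) := by
      intro j hj
      rw [Finset.mem_Icc] at hj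
      exact hwp j (Finset.mem_Icc.2 ⟨hj.1, le_trans hj.2 hi'.2⟩) (tm i) htm_mem
    rw [Finset.sum_congr rfl hwE'] at hd1'
    linarith
  -- optimality machinery
  set J : Set ℝ := Set.Ioc (0:ℝ) T with hJdef
  have hJm : MeasurableSet J := measurableSet_Ioc
  have hJsub : ∀ t ∈ J, t ∈ Set.Icc (0:ℝ) T := fun t ht => ⟨ht.1.le, ht.2⟩
  have hJfin : MeasureTheory.volume J < ⊤ := measure_Ioc_lt_top
  have hbint : ∀ (f : ℝ → ℝ) (C : ℝ), Measurable f → (∀ t ∈ J, |f t| ≤ C) →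
      MeasureTheory.IntegrableOn f J := by
    intro f C hf hC
    refine MeasureTheory.Integrable.mono'
      (MeasureTheory.integrableOn_const (C := C) hJfin.ne)
      hf.aestronglyMeasurable.restrict ?_
    rw [MeasureTheory.ae_restrict_iff' hJm]
    exact MeasureTheory.ae_of_all _ (fun t ht => by simpa [Real.norm_eq_abs] using hC t ht)
  have hsbound : ∃ C : ℝ, ∀ x : ℝ, |sproj x| ≤ C := by
    obtain ⟨C, hC⟩ := isCompact_Icc.exists_bound_of_continuousOn hscont
    exact ⟨C, fun x => by simpa [Real.norm_eq_abs] using hC _ (hprojmem x)⟩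
  have hpintJ : ∀ j, 1 ≤ j → j ≤ N → MeasureTheory.IntegrableOn (p j) J := by
    intro j h1 h2
    apply hbint _ (max (s (tm j)) 0) (hpmeas j h1 h2)
    intro t ht
    rw [abs_of_nonneg (hpbound j h1 h2 t).1]
    exact (hpbound j h1 h2 t).2
  have hBint : MeasureTheory.IntegrableOn (fun t => ∑ j ∈ Finset.Icc 1 N, p j t * μ j) J := by
    apply MeasureTheory.integrable_finset_sum
    intro j hj
    rw [Finset.mem_Icc] at hj
    exact (hpintJ j hj.1 hj.2).mul_const _
  have hswapgen : ∀ f g : ℕ → ℝ,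
      (∑ i ∈ Finset.Icc 1 N, (∑ j ∈ Finset.Icc 1 i, f j) * g i)
        = ∑ j ∈ Finset.Icc 1 N, f j * (∑ i ∈ Finset.Icc j N, g i) := by
    intro f g
    simp_rw [Finset.sum_mul]
    rw [Finset.sum_comm' (s := Finset.Icc 1 N) (t := fun i => Finset.Icc 1 i)
      (t' := Finset.Icc 1 N) (s' := fun j => Finset.Icc j N) (by
        intro x y
        simp only [Finset.mem_Icc]
        omega)]
    simp_rw [Finset.mul_sum]
  have main : ∀ r' : ℕ → ℝ → ℝ, FeasibleFlow N T μ Q r' →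
      ((∑ i ∈ Finset.Icc 1 N, ρ i * Q i) - ∫ t in J, (∑ j ∈ Finset.Icc 1 N, p j t * μ j)) ≤
        (∑ i ∈ Finset.Icc 1 N, ∫ t in (0:ℝ)..T, (s t + c i) * r' i t) ∧
      ((∀ t ∈ J, (∑ i ∈ Finset.Icc 1 N, ρ i * r' i t) - (∑ j ∈ Finset.Icc 1 N, p j t * μ j)
          = ∑ i ∈ Finset.Icc 1 N, (sproj t + c i) * r' i t) →
        ((∑ i ∈ Finset.Icc 1 N, ρ i * Q i) - ∫ t in J, (∑ j ∈ Finset.Icc 1 N, p j t * μ j)) =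
          (∑ i ∈ Finset.Icc 1 N, ∫ t in (0:ℝ)..T, (s t + c i) * r' i t)) := by
    intro r' hr'
    obtain ⟨hm, hb, hn, hcp, hd⟩ := hr'
    have hint : ∀ i, 1 ≤ i → i ≤ N → MeasureTheory.IntegrableOn (r' i) J := by
      intro i h1 h2
      obtain ⟨M, hM⟩ := hb i (Finset.mem_Icc.2 ⟨h1, h2⟩)
      apply hbint _ M (hm i (Finset.mem_Icc.2 ⟨h1, h2⟩))
      intro t ht
      rw [abs_of_nonneg (hn i (Finset.mem_Icc.2 ⟨h1, h2⟩) t (hJsub t ht))]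
      exact hM t (hJsub t ht)
    have hintF : ∀ i ∈ Finset.Icc 1 N,
        MeasureTheory.IntegrableOn (fun t => (sproj t + c i) * r' i t) J := by
      intro i hi
      rw [Finset.mem_Icc] at hi
      obtain ⟨C, hC⟩ := hsbound
      refine MeasureTheory.Integrable.bdd_mul (c := C + |c i|) (hint i hi.1 hi.2)
        ((hsprojcont.add continuous_const).aestronglyMeasurable.restrict) (MeasureTheory.ae_of_all _ (fun x => ?_))
      calc ‖sproj x + c i‖ ≤ |sproj x| + |c i| := abs_add_le _ _
        _ ≤ C + |c i| := by linarith [hC x]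
    have hintA : ∀ i ∈ Finset.Icc 1 N, MeasureTheory.IntegrableOn (fun t => ρ i * r' i t) J := by
      intro i hi
      rw [Finset.mem_Icc] at hi
      exact (hint i hi.1 hi.2).const_mul _
    have hintAs : MeasureTheory.IntegrableOn (fun t => ∑ i ∈ Finset.Icc 1 N, ρ i * r' i t) J :=
      MeasureTheory.integrable_finset_sum _ hintA
    have hintFs : MeasureTheory.IntegrableOn
        (fun t => ∑ i ∈ Finset.Icc 1 N, (sproj t + c i) * r' i t) J :=
      MeasureTheory.integrable_finset_sum _ hintF
    have hintG : MeasureTheory.IntegrableOn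
        (fun t => (∑ i ∈ Finset.Icc 1 N, ρ i * r' i t) - (∑ j ∈ Finset.Icc 1 N, p j t * μ j)) J :=
      hintAs.sub hBint
    have hconv : ∀ i ∈ Finset.Icc 1 N,
        ∫ t in (0:ℝ)..T, (s t + c i) * r' i t = ∫ t in J, (sproj t + c i) * r' i t := by
      intro i hi
      rw [intervalIntegral.integral_of_le hT.le]
      exact MeasureTheory.setIntegral_congr_fun hJm
        (fun t ht => by rw [hsproj_eq t ht.1.le ht.2])
    have hFeq : (∑ i ∈ Finset.Icc 1 N, ∫ t in (0:ℝ)..T, (s t + c i) * r' i t)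
        = ∫ t in J, (∑ i ∈ Finset.Icc 1 N, (sproj t + c i) * r' i t) := by
      rw [MeasureTheory.integral_finset_sum _ hintF]
      exact Finset.sum_congr rfl hconv
    have hr'Q : ∀ i ∈ Finset.Icc 1 N, ∫ t in J, r' i t = Q i := by
      intro i hi
      rw [← intervalIntegral.integral_of_le hT.le]
      exact hd i hi
    have hGeq : (∫ t in J, ((∑ i ∈ Finset.Icc 1 N, ρ i * r' i t)
          - (∑ j ∈ Finset.Icc 1 N, p j t * μ j)))
        = (∑ i ∈ Finset.Icc 1 N, ρ i * Q i)
          - ∫ t in J, (∑ j ∈ Finset.Icc 1 N, p j t * μ j) := by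
      rw [MeasureTheory.integral_sub hintAs hBint, MeasureTheory.integral_finset_sum _ hintA]
      congr 1
      refine Finset.sum_congr rfl (fun i hi => ?_)
      rw [MeasureTheory.integral_const_mul, hr'Q i hi]
    constructor
    · have hpt : ∀ t ∈ J, ((∑ i ∈ Finset.Icc 1 N, ρ i * r' i t)
          - (∑ j ∈ Finset.Icc 1 N, p j t * μ j))
          ≤ ∑ i ∈ Finset.Icc 1 N, (sproj t + c i) * r' i t := by
        intro t ht
        have htT := hJsub t ht
        have hstep1 : ∀ i ∈ Finset.Icc 1 N,
            ρ i * r' i t ≤ (sproj t + c i + ∑ j ∈ Finset.Icc 1 i, p j t) * r' i t := by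
          intro i hi
          apply mul_le_mul_of_nonneg_right _ (hn i hi t htT)
          rw [hsproj_eq t htT.1 htT.2]
          rw [Finset.mem_Icc] at hi
          exact (hE1 i hi.1 hi.2 t htT.1 htT.2).1
        have hstep2 : (∑ j ∈ Finset.Icc 1 N, p j t * (∑ i ∈ Finset.Icc j N, r' i t))
            ≤ ∑ j ∈ Finset.Icc 1 N, p j t * μ j := by
          refine Finset.sum_le_sum (fun j hj => ?_)
          have hj' := Finset.mem_Icc.1 hj
          exact mul_le_mul_of_nonneg_left (hcp j hj t htT) (hpbound j hj'.1 hj'.2 t).1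
        have hexp : (∑ i ∈ Finset.Icc 1 N, (sproj t + c i + ∑ j ∈ Finset.Icc 1 i, p j t) * r' i t)
            = (∑ i ∈ Finset.Icc 1 N, (sproj t + c i) * r' i t)
              + ∑ i ∈ Finset.Icc 1 N, (∑ j ∈ Finset.Icc 1 i, p j t) * r' i t := by
          rw [← Finset.sum_add_distrib]
          exact Finset.sum_congr rfl (fun i _ => by ring)
        have h1 := Finset.sum_le_sum hstep1
        rw [hexp, hswapgen (fun j => p j t) (fun i => r' i t)] at h1
        linarith
      have hmono := MeasureTheory.setIntegral_mono_on hintG hintFs hJm hpt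
      rw [hGeq] at hmono
      rw [hFeq]
      exact hmono
    · intro hpt
      have hGF : (∫ t in J, ((∑ i ∈ Finset.Icc 1 N, ρ i * r' i t)
            - (∑ j ∈ Finset.Icc 1 N, p j t * μ j)))
          = ∫ t in J, (∑ i ∈ Finset.Icc 1 N, (sproj t + c i) * r' i t) :=
        MeasureTheory.setIntegral_congr_fun hJm (fun t ht => hpt t ht)
      rw [hGeq] at hGF
      rw [hFeq, ← hGF]
  -- q is itself feasible
  have hq_feas : FeasibleFlow N T μ Q q := by
    refine ⟨fun i hi => (hPE.1 i hi).1, ?_, fun i hi t ht => (hPE.2.2.1 i hi t ht).1,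
      fun i hi t ht => (hPE.2.2.2.2.1 i hi t ht).1, hPE.2.2.2.2.2⟩
    intro i hi
    obtain ⟨M, hM⟩ := hPE.2.1 i hi
    exact ⟨M, fun t ht => (hM t ht).1⟩
  -- pointwise equality for q
  have hqpt : ∀ t ∈ J, (∑ i ∈ Finset.Icc 1 N, ρ i * q i t)
      - (∑ j ∈ Finset.Icc 1 N, p j t * μ j)
      = ∑ i ∈ Finset.Icc 1 N, (sproj t + c i) * q i t := by
    intro t ht
    have htT := hJsub t ht
    have h1 : ∀ i ∈ Finset.Icc 1 N,
        (sproj t + c i + ∑ j ∈ Finset.Icc 1 i, p j t) * q i t = ρ i * q i t := by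
      intro i hi
      by_cases hq0 : 0 < q i t
      · rw [hsproj_eq t htT.1 htT.2, (hPE.2.2.2.1 i hi t htT).2 hq0]
      · have hz : q i t = 0 := by
          have hi' := Finset.mem_Icc.1 hi
          exact le_antisymm (not_lt.1 hq0) (hqnn i hi'.1 hi'.2 t)
        rw [hz, mul_zero, mul_zero]
    have h2 : ∀ j ∈ Finset.Icc 1 N, p j t * (∑ i ∈ Finset.Icc j N, q i t) = p j t * μ j := by
      intro j hj
      by_cases hp0 : 0 < p j t
      · rw [(hPE.2.2.2.2.1 j hj t htT).2 hp0]
      · have hj' := Finset.mem_Icc.1 hj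
        have hz : p j t = 0 := le_antisymm (not_lt.1 hp0) (hpbound j hj'.1 hj'.2 t).1
        rw [hz, zero_mul, zero_mul]
    have hexp : (∑ i ∈ Finset.Icc 1 N, (sproj t + c i + ∑ j ∈ Finset.Icc 1 i, p j t) * q i t)
        = (∑ i ∈ Finset.Icc 1 N, (sproj t + c i) * q i t)
          + ∑ i ∈ Finset.Icc 1 N, (∑ j ∈ Finset.Icc 1 i, p j t) * q i t := by
      rw [← Finset.sum_add_distrib]
      exact Finset.sum_congr rfl (fun i _ => by ring)
    have hA : (∑ i ∈ Finset.Icc 1 N, ρ i * q i t)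
        = (∑ i ∈ Finset.Icc 1 N, (sproj t + c i) * q i t)
          + ∑ j ∈ Finset.Icc 1 N, p j t * μ j := by
      rw [← Finset.sum_congr rfl h1, hexp, hswapgen (fun j => p j t) (fun i => q i t),
        Finset.sum_congr rfl h2]
    linarith
  obtain ⟨-, hqeq⟩ := main q hq_feas
  have hqcost := hqeq hqpt
  refine ⟨hPE, ?_, hρeq⟩
  intro r hr
  rw [← hqcost]
  exact (main r hr).1
end
end

section
/- (Closed-form DSO solution, evening.) Under the reduced-network assumptions for the evening-commute corridor network, the explicit collection (q_i, ρ_i, p_i) defined by q_i(t) = μ̂_i·1_{𝒯_i}(t), ρ_i = s(t_i^-) + c_i, and p_i(t) = ρ_i − s(t) − c_i − Σ_{j=1}^{i−1} p_j(t) for t ∈ 𝒯_i with p_i(t) = 0 otherwise, satisfies p_i(t) ≥ 0 for all i, t, is an evening pricing equilibrium (satisfies (E1), (E2), (E3)), and the departure-flow pattern (q_i) minimizes the social transport cost Σ_{i=1}^{N} ∫_0^T (s(t)+c_i)·r_i(t) dt over all feasible flow patterns (r_i). -/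
open MeasureTheory Finset Set
open scoped Classical

noncomputable section


lemma aux_meas_ind {a b : ℝ} {f : ℝ → ℝ} (hf : ContinuousOn f (Set.Icc a b)) :
    Measurable (fun t => if t ∈ Set.Icc a b then f t else 0) := by
  have h := hf.measurable_piecewise (g := fun _ => (0:ℝ))
    (continuousOn_const) measurableSet_Icc
  have he : (fun t => if t ∈ Set.Icc a b then f t else 0)
      = (Set.Icc a b).piecewise f (fun _ => 0) := by
    ext t
    by_cases ht : t ∈ Set.Icc a b <;> simp [Set.piecewise, ht]
  rw [he]; exact h

lemma aux_integrable {T : ℝ} {f : ℝ → ℝ}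
    (hf : AEMeasurable f (volume.restrict (Set.Ioc 0 T))) (C : ℝ)
    (hb : ∀ t ∈ Set.Ioc (0:ℝ) T, |f t| ≤ C) :
    IntegrableOn f (Set.Ioc 0 T) := by
  refine ⟨hf.aestronglyMeasurable, ?_⟩
  apply HasFiniteIntegral.of_bounded (C := C)
  filter_upwards [ae_restrict_mem measurableSet_Ioc] with t ht
  simpa using hb t ht

lemma aux_swap (N : ℕ) (a b : ℕ → ℝ) :
    ∑ i ∈ Finset.Icc 1 N, (∑ j ∈ Finset.Icc 1 i, a j) * b i
      = ∑ j ∈ Finset.Icc 1 N, a j * ∑ i ∈ Finset.Icc j N, b i := by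
  have h1 : ∀ i ∈ Finset.Icc 1 N,
      (∑ j ∈ Finset.Icc 1 i, a j) * b i
        = ∑ j ∈ Finset.Icc 1 N, (if j ≤ i then a j * b i else 0) := by
    intro i hi
    simp only [Finset.mem_Icc] at hi
    rw [← Finset.sum_filter, Finset.sum_mul]
    apply Finset.sum_congr
    · ext j; simp only [Finset.mem_filter, Finset.mem_Icc]; omega
    · intros; rfl
  rw [Finset.sum_congr rfl h1, Finset.sum_comm]
  apply Finset.sum_congr rfl
  intro j hj
  simp only [Finset.mem_Icc] at hj
  rw [Finset.mul_sum, ← Finset.sum_filter]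
  apply Finset.sum_congr
  · ext i; simp only [Finset.mem_filter, Finset.mem_Icc]; omega
  · intros; rfl

lemma aux_ind_integral {T a b C : ℝ} (h0 : 0 < a) (hab : a ≤ b) (hbT : b ≤ T) :
    ∫ t in (0:ℝ)..T, (if t ∈ Set.Icc a b then C else 0) = C * (b - a) := by
  have hT : (0:ℝ) ≤ T := le_trans (le_trans h0.le hab) hbT
  rw [intervalIntegral.integral_of_le hT]
  have : (fun t => if t ∈ Set.Icc a b then C else 0)
      = Set.indicator (Set.Icc a b) (fun _ => C) := by
    ext t; by_cases ht : t ∈ Set.Icc a b <;> simp [ht]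
  rw [this, MeasureTheory.setIntegral_indicator measurableSet_Icc]
  have hsub : Set.Ioc (0:ℝ) T ∩ Set.Icc a b = Set.Icc a b := by
    apply Set.inter_eq_self_of_subset_right
    intro x hx
    exact ⟨lt_of_lt_of_le h0 hx.1, le_trans hx.2 hbT⟩
  rw [hsub, MeasureTheory.setIntegral_const, measureReal_def, Real.volume_Icc, smul_eq_mul,
    ENNReal.toReal_ofReal (by linarith), mul_comm]


/-- closed-form DSO solution, evening: in the evening commute
(single origin, destinations `i = 1,…,N`, `q i` the origin departure flow bound
for destination `i`), the explicit collection is nonnegatively priced, is an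
evening pricing equilibrium, and its departure-flow pattern minimizes the
social transport cost over all feasible flow patterns. -/
theorem stmt16 (N : ℕ) (T td : ℝ) (μ Q c : ℕ → ℝ) (s : ℝ → ℝ)
    (tm tp : ℕ → ℝ) (q p : ℕ → ℝ → ℝ) (ρ : ℕ → ℝ)
    (hnet : CorridorNet N T td μ Q c s)
    (hred : ReducedNet N T μ Q s tm tp)
    (hdso : ExplicitDSO N μ c s tm tp q p ρ)
    :
    (∀ i ∈ Finset.Icc 1 N, ∀ t ∈ Set.Icc (0:ℝ) T, 0 ≤ p i t) ∧
    IsPricingEq N T μ Q c s q p ρ ∧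
    (∀ r : ℕ → ℝ → ℝ, FeasibleFlow N T μ Q r →
      (∑ i ∈ Finset.Icc 1 N, ∫ t in (0:ℝ)..T, (s t + c i) * q i t) ≤
      (∑ i ∈ Finset.Icc 1 N, ∫ t in (0:ℝ)..T, (s t + c i) * r i t)) := by
  obtain ⟨hq, hρ, hp⟩ := hdso
  obtain ⟨hN, hT, htd, hpos, hscont, hsnn, hstd, hqc⟩ := hnet
  obtain ⟨hμdec, hμN, hTinc, hwin⟩ := hred
  have hmem : ∀ i, 1 ≤ i → i ≤ N → i ∈ Finset.Icc 1 N := fun i h1 h2 => Finset.mem_Icc.2 ⟨h1, h2⟩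
  have htdI : td ∈ Set.Icc (0:ℝ) T := ⟨htd.1.le, htd.2.le⟩
  -- positivity of muhat
  have hmuhat : ∀ i, 1 ≤ i → i ≤ N → 0 < muhat N μ i := by
    intro i h1 h2; unfold muhat
    by_cases h : i < N
    · rw [if_pos h]; linarith [hμdec i h1 h]
    · rw [if_neg h]; exact hμN
  -- window length positive
  have hlen : ∀ i, 1 ≤ i → i ≤ N → 0 < tp i - tm i := by
    intro i h1 h2
    obtain ⟨_, _, hleq, _⟩ := hwin i (hmem i h1 h2)
    rw [hleq]
    exact div_pos (hpos i (hmem i h1 h2)).2.1 (hmuhat i h1 h2)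
  -- s positive away from td
  have hspos : ∀ x ∈ Set.Icc (0:ℝ) T, x ≠ td → 0 < s x := by
    intro x hx hne
    rcases lt_or_ge 0 (s x) with h|h
    · exact h
    have hx0 : s x = 0 := le_antisymm h (hsnn x hx)
    have hmid := hqc x hx td htdI hne (1/2) ⟨by norm_num, by norm_num⟩
    rw [hx0, hstd] at hmid
    have hmI : 1/2 * x + (1 - 1/2) * td ∈ Set.Icc (0:ℝ) T := by
      constructor
      · nlinarith [hx.1, htd.1.le]
      · nlinarith [hx.2, htd.2.le]
    have := hsnn _ hmI
    simp at hmid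
    linarith
  -- strict decrease left of td
  have hsdec : ∀ a b : ℝ, 0 ≤ a → a < b → b ≤ td → s b < s a := by
    intro a b ha hab hb
    have haT : a ∈ Set.Icc (0:ℝ) T := ⟨ha, by linarith [htd.2]⟩
    have hane : a ≠ td := by linarith
    rcases eq_or_lt_of_le hb with rfl|hblt
    · rw [hstd]; exact hspos a haT hane
    · have h1 : (0:ℝ) < td - a := by linarith
      have hl0 : 0 < (td - b)/(td - a) := div_pos (by linarith) h1
      have hl1 : (td - b)/(td - a) < 1 := (div_lt_one h1).2 (by linarith)
      have hcomb : (td - b)/(td - a) * a + (1 - (td - b)/(td - a)) * td = b := by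
        field_simp
        ring
      have := hqc a haT td htdI hane _ ⟨hl0, hl1⟩
      rw [hcomb, hstd] at this
      calc s b < max (s a) 0 := this
        _ = s a := max_eq_left (hsnn a haT)
  -- strict increase right of td
  have hsinc : ∀ a b : ℝ, td ≤ a → a < b → b ≤ T → s a < s b := by
    intro a b ha hab hb
    have hbT : b ∈ Set.Icc (0:ℝ) T := ⟨by linarith [htd.1.le], hb⟩
    have hbne : b ≠ td := by linarith
    rcases eq_or_lt_of_le ha with h|h
    · rw [← h, hstd]; exact hspos b hbT hbne
    · have h1 : (0:ℝ) < b - td := by linarith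
      have hl0 : 0 < (a - td)/(b - td) := div_pos (by linarith) h1
      have hl1 : (a - td)/(b - td) < 1 := (div_lt_one h1).2 (by linarith)
      have hcomb : (a - td)/(b - td) * b + (1 - (a - td)/(b - td)) * td = a := by
        field_simp
        ring
      have := hqc b hbT td htdI hbne _ ⟨hl0, hl1⟩
      rw [hcomb, hstd] at this
      calc s a < max (s b) 0 := this
        _ = s b := max_eq_left (hsnn b hbT)
  -- td inside each window
  have hwin_td : ∀ i, 1 ≤ i → i ≤ N → tm i < td ∧ td < tp i := by
    intro i h1 h2
    obtain ⟨h0m, hpT, hleq, hsym⟩ := hwin i (hmem i h1 h2)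
    have hlt : tm i < tp i := by linarith [hlen i h1 h2]
    constructor
    · by_contra h; push_neg at h
      have := hsinc (tm i) (tp i) h hlt hpT.le
      linarith
    · by_contra h; push_neg at h
      have := hsdec (tm i) (tp i) h0m.le hlt h
      linarith
  -- strict nesting of consecutive windows
  have hnest_succ : ∀ i, 1 ≤ i → i < N → tm (i+1) < tm i ∧ tp i < tp (i+1) := by
    intro i h1 h2
    obtain ⟨h0m, hpT, hleq, hsym⟩ := hwin i (hmem i h1 (le_of_lt h2))
    obtain ⟨h0m', hpT', hleq', hsym'⟩ := hwin (i+1) (hmem (i+1) (by omega) (by omega))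
    have hLi : tp i - tm i < tp (i+1) - tm (i+1) := by
      rw [hleq, hleq']; exact hTinc i h1 h2
    obtain ⟨htm1, htp1⟩ := hwin_td i h1 (le_of_lt h2)
    obtain ⟨htm1', htp1'⟩ := hwin_td (i+1) (by omega) (by omega)
    rcases lt_trichotomy (tm i) (tm (i+1)) with h|h|h
    · exfalso
      have hm : s (tm (i+1)) < s (tm i) := hsdec (tm i) (tm (i+1)) h0m.le h htm1'.le
      have hpp : s (tp (i+1)) < s (tp i) := by rw [← hsym, ← hsym']; exact hm
      rcases le_or_gt (tp i) (tp (i+1)) with hc|hc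
      · rcases eq_or_lt_of_le hc with hc'|hc'
        · rw [hc'] at hpp; linarith
        · have := hsinc (tp i) (tp (i+1)) htp1.le hc' hpT'.le
          linarith
      · linarith
    · exfalso
      have hm : s (tm i) = s (tm (i+1)) := by rw [h]
      have hpp : s (tp i) = s (tp (i+1)) := by rw [← hsym, ← hsym']; exact hm
      rcases lt_trichotomy (tp i) (tp (i+1)) with hc|hc|hc
      · have := hsinc (tp i) (tp (i+1)) htp1.le hc hpT'.le
        linarith
      · rw [h, hc] at hLi; linarith
      · have := hsinc (tp (i+1)) (tp i) htp1'.le hc hpT.le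
        linarith
    · refine ⟨h, ?_⟩
      have hm : s (tm i) < s (tm (i+1)) := hsdec (tm (i+1)) (tm i) h0m'.le h htm1.le
      have hpp : s (tp i) < s (tp (i+1)) := by rw [← hsym, ← hsym']; exact hm
      rcases le_or_gt (tp (i+1)) (tp i) with hc|hc
      · exfalso
        rcases eq_or_lt_of_le hc with hc'|hc'
        · rw [hc'] at hpp; linarith
        · have := hsinc (tp (i+1)) (tp i) htp1'.le hc' hpT.le
          linarith
      · exact hc
  -- nesting
  have hnest : ∀ i j, 1 ≤ i → i ≤ j → j ≤ N → tm j ≤ tm i ∧ tp i ≤ tp j := by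
    intro i j h1 hij
    induction j, hij using Nat.le_induction with
    | base => exact fun _ => ⟨le_refl _, le_refl _⟩
    | succ j hij IH =>
      intro hjN
      obtain ⟨ha, hb⟩ := IH (by omega)
      have hs := hnest_succ j (by omega) (by omega)
      exact ⟨le_trans hs.1.le ha, le_trans hb hs.2.le⟩
  -- windows inside [0,T]
  have hsubI : ∀ i, 1 ≤ i → i ≤ N → Set.Icc (tm i) (tp i) ⊆ Set.Icc (0:ℝ) T := by
    intro i h1 h2
    obtain ⟨h0m, hpT, _, _⟩ := hwin i (hmem i h1 h2)
    exact Set.Icc_subset_Icc h0m.le hpT.le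
  -- s maximal at window endpoints
  have hsmax : ∀ i, 1 ≤ i → i ≤ N → ∀ t ∈ Set.Icc (tm i) (tp i), s t ≤ s (tm i) := by
    intro i h1 h2 t ht
    obtain ⟨h0m, hpT, _, hsym⟩ := hwin i (hmem i h1 h2)
    rcases eq_or_lt_of_le ht.1 with h|h
    · rw [← h]
    rcases le_or_gt t td with hc|hc
    · exact (hsdec (tm i) t h0m.le h hc).le
    · rcases eq_or_lt_of_le ht.2 with h'|h'
      · rw [h', ← hsym]
      · rw [hsym]
        exact (hsinc t (tp i) hc.le h' hpT.le).le
  -- the cumulative price sum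
  have hS : ∀ i, 1 ≤ i → i ≤ N → ∀ t : ℝ,
      (∑ j ∈ Finset.Icc 1 i, p j t)
        = if t ∈ Set.Icc (tm i) (tp i) then s (tm i) - s t else 0 := by
    intro i hi
    induction i, hi using Nat.le_induction with
    | base =>
      intro _ t
      rw [Finset.Icc_self, Finset.sum_singleton, hp 1 (hmem 1 le_rfl hN) t,
        hρ 1 (hmem 1 le_rfl hN)]
      have he : Finset.Icc 1 (1-1) = (∅ : Finset ℕ) := by decide
      rw [he, Finset.sum_empty]
      split_ifs with h
      · ring
      · rfl
    | succ k hk IH =>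
      intro hk1 t
      have hkN : k ≤ N := by omega
      rw [Finset.sum_Icc_succ_top (by omega), hp (k+1) (hmem (k+1) (by omega) hk1) t]
      have hred1 : (k+1) - 1 = k := by omega
      rw [hred1, hρ (k+1) (hmem (k+1) (by omega) hk1), IH hkN]
      have hsub2 : Set.Icc (tm k) (tp k) ⊆ Set.Icc (tm (k+1)) (tp (k+1)) := by
        have hn := hnest k (k+1) (by omega) (by omega) hk1
        exact Set.Icc_subset_Icc hn.1 hn.2
      by_cases h1 : t ∈ Set.Icc (tm (k+1)) (tp (k+1))
      · rw [if_pos h1, if_pos h1]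
        split_ifs with h2
        · ring
        · ring
      · rw [if_neg h1, if_neg h1, if_neg (fun h => h1 (hsub2 h)), add_zero]
  -- closed form of p
  have hpval : ∀ i, 1 ≤ i → i ≤ N → ∀ t : ℝ,
      p i t = (if t ∈ Set.Icc (tm i) (tp i) then s (tm i) - s t else 0)
        - (if 2 ≤ i then
            (if t ∈ Set.Icc (tm (i-1)) (tp (i-1)) then s (tm (i-1)) - s t else 0)
          else 0) := by
    intro i h1 h2 t
    rcases eq_or_lt_of_le h1 with h|h
    · have hi1 : i = 1 := h.symm
      subst hi1
      rw [if_neg (by norm_num : ¬ (2:ℕ) ≤ 1), sub_zero]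
      have e := hS 1 le_rfl h2 t
      rw [Finset.Icc_self, Finset.sum_singleton] at e
      exact e
    · have h2i : 2 ≤ i := h
      have e1 := hS i h1 h2 t
      have e2 := hS (i-1) (by omega) (by omega) t
      have e3 : (∑ j ∈ Finset.Icc 1 i, p j t)
          = (∑ j ∈ Finset.Icc 1 (i-1), p j t) + p i t := by
        conv_lhs => rw [show i = (i-1)+1 by omega]
        rw [Finset.sum_Icc_succ_top (by omega), show (i-1)+1 = i by omega]
      rw [if_pos h2i]
      linarith
  -- nonnegativity of p
  have hpnn : ∀ i, 1 ≤ i → i ≤ N → ∀ t : ℝ, 0 ≤ p i t := by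
    intro i h1 h2 t
    rw [hpval i h1 h2 t]
    by_cases h2i : 2 ≤ i
    · rw [if_pos h2i]
      have hn := hnest (i-1) i (by omega) (by omega) h2
      have hsub2 : Set.Icc (tm (i-1)) (tp (i-1)) ⊆ Set.Icc (tm i) (tp i) :=
        Set.Icc_subset_Icc hn.1 hn.2
      by_cases hti : t ∈ Set.Icc (tm i) (tp i)
      · rw [if_pos hti]
        by_cases hti' : t ∈ Set.Icc (tm (i-1)) (tp (i-1))
        · rw [if_pos hti']
          have hge : s (tm (i-1)) ≤ s (tm i) := by
            rcases eq_or_lt_of_le hn.1 with h|h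
            · rw [h]
            · exact (hsdec (tm i) (tm (i-1))
                (hwin i (hmem i h1 h2)).1.le h
                (hwin_td (i-1) (by omega) (by omega)).1.le).le
          linarith
        · rw [if_neg hti']
          have := hsmax i h1 h2 t hti
          linarith
      · rw [if_neg hti, if_neg (fun h => hti (hsub2 h))]
        simp
    · rw [if_neg h2i, sub_zero]
      split_ifs with hti
      · have := hsmax i h1 h2 t hti
        linarith
      · exact le_refl 0
  -- cumulative capacity identity (E2)
  have hGaux : ∀ d i, 1 ≤ i → i ≤ N → N - i = d → ∀ t : ℝ,
      (∑ j ∈ Finset.Icc i N, q j t) ≤ μ i ∧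
      (t ∈ Set.Icc (tm i) (tp i) → (∑ j ∈ Finset.Icc i N, q j t) = μ i) := by
    intro d
    induction d with
    | zero =>
      intro i h1 h2 hd t
      have hiN : i = N := by omega
      subst hiN
      rw [Finset.Icc_self, Finset.sum_singleton, hq i (hmem i h1 le_rfl) t]
      have hmu : muhat i μ i = μ i := by unfold muhat; rw [if_neg (lt_irrefl i)]
      rw [hmu]
      split_ifs with h
      · exact ⟨le_refl _, fun _ => rfl⟩
      · exact ⟨hμN.le, fun ht => absurd ht h⟩
    | succ d ih =>
      intro i h1 h2 hd t
      have hiN : i < N := by omega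
      have hins : Finset.Icc i N = insert i (Finset.Icc (i+1) N) := by
        ext x; simp only [Finset.mem_Icc, Finset.mem_insert]; omega
      rw [hins, Finset.sum_insert (by simp only [Finset.mem_Icc]; omega)]
      have IH := ih (i+1) (by omega) (by omega) (by omega) t
      rw [hq i (hmem i h1 h2) t]
      have hmu : muhat N μ i = μ i - μ (i+1) := by unfold muhat; rw [if_pos hiN]
      by_cases hti : t ∈ Set.Icc (tm i) (tp i)
      · rw [if_pos hti, hmu]
        have hn := hnest i (i+1) h1 (by omega) (by omega)
        have hti' : t ∈ Set.Icc (tm (i+1)) (tp (i+1)) :=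
          ⟨le_trans hn.1 hti.1, le_trans hti.2 hn.2⟩
        have heq := IH.2 hti'
        rw [heq]
        exact ⟨by linarith, fun _ => by ring⟩
      · rw [if_neg hti, zero_add]
        exact ⟨le_trans IH.1 (by linarith [hμdec i h1 hiN]), fun ht => absurd ht hti⟩
  have hG : ∀ i, 1 ≤ i → i ≤ N → ∀ t : ℝ,
      (∑ j ∈ Finset.Icc i N, q j t) ≤ μ i ∧
      (t ∈ Set.Icc (tm i) (tp i) → (∑ j ∈ Finset.Icc i N, q j t) = μ i) :=
    fun i h1 h2 => hGaux (N - i) i h1 h2 rfl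
  -- q nonneg and bounded
  have hqnn : ∀ i, 1 ≤ i → i ≤ N → ∀ t : ℝ, 0 ≤ q i t := by
    intro i h1 h2 t
    rw [hq i (hmem i h1 h2) t]
    split_ifs
    · exact (hmuhat i h1 h2).le
    · exact le_refl 0
  have hqbd : ∀ i, 1 ≤ i → i ≤ N → ∀ t : ℝ, q i t ≤ muhat N μ i := by
    intro i h1 h2 t
    rw [hq i (hmem i h1 h2) t]
    split_ifs
    · exact le_refl _
    · exact (hmuhat i h1 h2).le
  -- measurability
  have hqmeas : ∀ i, 1 ≤ i → i ≤ N → Measurable (q i) := by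
    intro i h1 h2
    have he : q i = fun t => if t ∈ Set.Icc (tm i) (tp i) then muhat N μ i else 0 :=
      funext (hq i (hmem i h1 h2))
    rw [he]
    exact aux_meas_ind continuousOn_const
  have hSmeas : ∀ k, 1 ≤ k → k ≤ N →
      Measurable (fun t => if t ∈ Set.Icc (tm k) (tp k) then s (tm k) - s t else 0) := by
    intro k h1 h2
    exact aux_meas_ind (continuousOn_const.sub (hscont.mono (hsubI k h1 h2)))
  have hpmeas : ∀ i, 1 ≤ i → i ≤ N → Measurable (p i) := by
    intro i h1 h2
    have he : p i = fun t =>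
        (if t ∈ Set.Icc (tm i) (tp i) then s (tm i) - s t else 0)
          - (if 2 ≤ i then
              (if t ∈ Set.Icc (tm (i-1)) (tp (i-1)) then s (tm (i-1)) - s t else 0)
            else 0) := funext (hpval i h1 h2)
    rw [he]
    by_cases h2i : 2 ≤ i
    · simp only [if_pos h2i]
      exact (hSmeas i h1 h2).sub (hSmeas (i-1) (by omega) (by omega))
    · simp only [if_neg h2i, sub_zero]
      exact hSmeas i h1 h2
  -- bound on s
  obtain ⟨Ms, hMs⟩ := isCompact_Icc.exists_bound_of_continuousOn hscont
  have hMs' : ∀ x ∈ Set.Icc (0:ℝ) T, |s x| ≤ Ms := by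
    intro x hx; have := hMs x hx; rwa [Real.norm_eq_abs] at this
  have hMs0 : 0 ≤ Ms := le_trans (abs_nonneg _) (hMs' 0 ⟨le_refl _, hT.le⟩)
  have hSbd : ∀ k, 1 ≤ k → k ≤ N → ∀ t : ℝ,
      |if t ∈ Set.Icc (tm k) (tp k) then s (tm k) - s t else 0| ≤ 2 * Ms := by
    intro k h1 h2 t
    split_ifs with h
    · have e1 := hMs' (tm k) (hsubI k h1 h2 ⟨le_refl _, by linarith [hlen k h1 h2]⟩)
      have e2 := hMs' t (hsubI k h1 h2 h)
      calc |s (tm k) - s t| ≤ |s (tm k)| + |s t| := abs_sub _ _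
        _ ≤ 2 * Ms := by linarith
    · rw [abs_zero]; linarith
  have hpbd : ∀ i, 1 ≤ i → i ≤ N → ∀ t : ℝ, p i t ≤ 4 * Ms := by
    intro i h1 h2 t
    rw [hpval i h1 h2 t]
    have e1 := abs_le.1 (hSbd i h1 h2 t)
    by_cases h2i : 2 ≤ i
    · rw [if_pos h2i]
      have e2 := abs_le.1 (hSbd (i-1) (by omega) (by omega) t)
      linarith [e1.2, e2.1]
    · rw [if_neg h2i, sub_zero]
      linarith [e1.2]
  -- E1
  have hE1 : ∀ i, 1 ≤ i → i ≤ N → ∀ t ∈ Set.Icc (0:ℝ) T,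
      (ρ i ≤ s t + c i + ∑ j ∈ Finset.Icc 1 i, p j t) ∧
      (0 < q i t → s t + c i + ∑ j ∈ Finset.Icc 1 i, p j t = ρ i) := by
    intro i h1 h2 t ht
    rw [hρ i (hmem i h1 h2), hS i h1 h2 t]
    by_cases hti : t ∈ Set.Icc (tm i) (tp i)
    · rw [if_pos hti]
      exact ⟨by linarith, fun _ => by ring⟩
    · rw [if_neg hti]
      obtain ⟨h0m, hpT, _, hsym⟩ := hwin i (hmem i h1 h2)
      have hstm : s (tm i) ≤ s t := by
        rcases lt_or_ge t (tm i) with h|h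
        · exact (hsdec t (tm i) ht.1 h (hwin_td i h1 h2).1.le).le
        · have h' : tp i < t := by
            by_contra hc; push_neg at hc; exact hti ⟨h, hc⟩
          have := hsinc (tp i) t (hwin_td i h1 h2).2.le h' ht.2
          linarith
      refine ⟨by linarith, fun hqpos => ?_⟩
      exfalso
      rw [hq i (hmem i h1 h2) t, if_neg hti] at hqpos
      exact lt_irrefl 0 hqpos
  -- E3
  have hE3 : ∀ i, 1 ≤ i → i ≤ N → ∫ t in (0:ℝ)..T, q i t = Q i := by
    intro i h1 h2
    obtain ⟨h0m, hpT, hleq, _⟩ := hwin i (hmem i h1 h2)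
    have he : q i = fun t => if t ∈ Set.Icc (tm i) (tp i) then muhat N μ i else 0 :=
      funext (hq i (hmem i h1 h2))
    rw [he, aux_ind_integral h0m (by linarith [hlen i h1 h2]) hpT.le, hleq,
      mul_comm, div_mul_cancel₀ _ (ne_of_gt (hmuhat i h1 h2))]
  -- integrability setup
  have hsae : AEMeasurable s (volume.restrict (Set.Ioc 0 T)) :=
    (hscont.mono Set.Ioc_subset_Icc_self).aemeasurable measurableSet_Ioc
  have hqQ : ∀ i, 1 ≤ i → i ≤ N → ∫ t in Set.Ioc (0:ℝ) T, q i t = Q i := by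
    intro i h1 h2
    rw [← intervalIntegral.integral_of_le hT.le]
    exact hE3 i h1 h2
  have hint_q0 : ∀ i, 1 ≤ i → i ≤ N → IntegrableOn (q i) (Set.Ioc 0 T) := by
    intro i h1 h2
    apply aux_integrable (hqmeas i h1 h2).aemeasurable (muhat N μ i)
    intro t ht
    rw [abs_of_nonneg (hqnn i h1 h2 t)]
    exact hqbd i h1 h2 t
  have hint_q : ∀ i, 1 ≤ i → i ≤ N →
      IntegrableOn (fun t => (s t + c i) * q i t) (Set.Ioc 0 T) := by
    intro i h1 h2
    apply aux_integrable ((hsae.add aemeasurable_const).mul (hqmeas i h1 h2).aemeasurable)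
      ((Ms + |c i|) * muhat N μ i)
    intro t ht
    rw [Pi.mul_apply, Pi.add_apply, abs_mul]
    apply mul_le_mul ?_ ?_ (abs_nonneg _) (by linarith [abs_nonneg (c i)])
    · calc |s t + c i| ≤ |s t| + |c i| := abs_add_le _ _
        _ ≤ Ms + |c i| := by linarith [hMs' t (Set.Ioc_subset_Icc_self ht)]
    · rw [abs_of_nonneg (hqnn i h1 h2 t)]
      exact hqbd i h1 h2 t
  -- optimality
  have hopt : ∀ r : ℕ → ℝ → ℝ, FeasibleFlow N T μ Q r →
      (∑ i ∈ Finset.Icc 1 N, ∫ t in (0:ℝ)..T, (s t + c i) * q i t) ≤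
      (∑ i ∈ Finset.Icc 1 N, ∫ t in (0:ℝ)..T, (s t + c i) * r i t) := by
    intro r hr
    obtain ⟨hrm, hrb, hrn, hrc, hri⟩ := hr
    have hrQ : ∀ i, 1 ≤ i → i ≤ N → ∫ t in Set.Ioc (0:ℝ) T, r i t = Q i := by
      intro i h1 h2
      rw [← intervalIntegral.integral_of_le hT.le]
      exact hri i (hmem i h1 h2)
    have hrbd : ∀ i, 1 ≤ i → i ≤ N → ∃ M : ℝ, ∀ t ∈ Set.Icc (0:ℝ) T, |r i t| ≤ M := by
      intro i h1 h2
      obtain ⟨M, hM⟩ := hrb i (hmem i h1 h2)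
      exact ⟨M, fun t ht => by
        rw [abs_of_nonneg (hrn i (hmem i h1 h2) t ht)]; exact hM t ht⟩
    have hint_r0 : ∀ i, 1 ≤ i → i ≤ N → IntegrableOn (r i) (Set.Ioc 0 T) := by
      intro i h1 h2
      obtain ⟨M, hM⟩ := hrbd i h1 h2
      exact aux_integrable (hrm i (hmem i h1 h2)).aemeasurable M
        (fun t ht => hM t (Set.Ioc_subset_Icc_self ht))
    have hint_r : ∀ i, 1 ≤ i → i ≤ N →
        IntegrableOn (fun t => (s t + c i) * r i t) (Set.Ioc 0 T) := by
      intro i h1 h2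
      obtain ⟨M, hM⟩ := hrbd i h1 h2
      apply aux_integrable ((hsae.add aemeasurable_const).mul
        (hrm i (hmem i h1 h2)).aemeasurable) ((Ms + |c i|) * M)
      intro t ht
      rw [Pi.mul_apply, Pi.add_apply, abs_mul]
      apply mul_le_mul ?_ (hM t (Set.Ioc_subset_Icc_self ht)) (abs_nonneg _)
        (by linarith [abs_nonneg (c i)])
      calc |s t + c i| ≤ |s t| + |c i| := abs_add_le _ _
        _ ≤ Ms + |c i| := by linarith [hMs' t (Set.Ioc_subset_Icc_self ht)]
    have hkey : ∀ t ∈ Set.Ioc (0:ℝ) T,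
        (∑ i ∈ Finset.Icc 1 N, (s t + c i) * q i t)
          + (∑ i ∈ Finset.Icc 1 N, ρ i * (r i t - q i t))
        ≤ ∑ i ∈ Finset.Icc 1 N, (s t + c i) * r i t := by
      intro t ht
      have ht' : t ∈ Set.Icc (0:ℝ) T := Set.Ioc_subset_Icc_self ht
      have a1 : ∀ i ∈ Finset.Icc 1 N,
          (s t + c i) * q i t
            = ρ i * q i t - (∑ j ∈ Finset.Icc 1 i, p j t) * q i t := by
        intro i hi
        obtain ⟨hi1, hi2⟩ := Finset.mem_Icc.1 hi
        rcases eq_or_lt_of_le (hqnn i hi1 hi2 t) with h|h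
        · rw [← h]; ring
        · have he := (hE1 i hi1 hi2 t ht').2 h
          have heq : s t + c i = ρ i - ∑ j ∈ Finset.Icc 1 i, p j t := by linarith
          rw [heq]; ring
      have a2 : ∑ i ∈ Finset.Icc 1 N, (∑ j ∈ Finset.Icc 1 i, p j t) * q i t
          = ∑ j ∈ Finset.Icc 1 N, p j t * μ j := by
        rw [aux_swap N (fun j => p j t) (fun i => q i t)]
        apply Finset.sum_congr rfl
        intro j hj
        obtain ⟨hj1, hj2⟩ := Finset.mem_Icc.1 hj
        rcases eq_or_lt_of_le (hpnn j hj1 hj2 t) with h|h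
        · rw [← h, zero_mul, zero_mul]
        · have htj : t ∈ Set.Icc (tm j) (tp j) := by
            by_contra hc
            rw [hp j (hmem j hj1 hj2) t, if_neg hc] at h
            exact lt_irrefl 0 h
          rw [(hG j hj1 hj2 t).2 htj]
      have a3 : ∑ i ∈ Finset.Icc 1 N, (∑ j ∈ Finset.Icc 1 i, p j t) * r i t
          ≤ ∑ j ∈ Finset.Icc 1 N, p j t * μ j := by
        rw [aux_swap N (fun j => p j t) (fun i => r i t)]
        apply Finset.sum_le_sum
        intro j hj
        obtain ⟨hj1, hj2⟩ := Finset.mem_Icc.1 hj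
        exact mul_le_mul_of_nonneg_left (hrc j hj t ht') (hpnn j hj1 hj2 t)
      have a4 : ∀ i ∈ Finset.Icc 1 N,
          ρ i * r i t - (∑ j ∈ Finset.Icc 1 i, p j t) * r i t
            ≤ (s t + c i) * r i t := by
        intro i hi
        obtain ⟨hi1, hi2⟩ := Finset.mem_Icc.1 hi
        have he := (hE1 i hi1 hi2 t ht').1
        have hrn' := hrn i hi t ht'
        have hmul := mul_le_mul_of_nonneg_right
          (show ρ i - ∑ j ∈ Finset.Icc 1 i, p j t ≤ s t + c i by linarith) hrn'
        rw [sub_mul] at hmul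
        linarith
      have s1 : ∑ i ∈ Finset.Icc 1 N, (s t + c i) * q i t
          = (∑ i ∈ Finset.Icc 1 N, ρ i * q i t)
            - ∑ i ∈ Finset.Icc 1 N, (∑ j ∈ Finset.Icc 1 i, p j t) * q i t := by
        rw [← Finset.sum_sub_distrib]
        exact Finset.sum_congr rfl a1
      have s4 : (∑ i ∈ Finset.Icc 1 N, ρ i * r i t)
            - ∑ i ∈ Finset.Icc 1 N, (∑ j ∈ Finset.Icc 1 i, p j t) * r i t
          ≤ ∑ i ∈ Finset.Icc 1 N, (s t + c i) * r i t := by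
        rw [← Finset.sum_sub_distrib]
        exact Finset.sum_le_sum a4
      have s5 : ∑ i ∈ Finset.Icc 1 N, ρ i * (r i t - q i t)
          = (∑ i ∈ Finset.Icc 1 N, ρ i * r i t)
            - ∑ i ∈ Finset.Icc 1 N, ρ i * q i t := by
        rw [← Finset.sum_sub_distrib]
        exact Finset.sum_congr rfl (fun i _ => by ring)
      linarith
    have intF1 : Integrable (fun t => ∑ i ∈ Finset.Icc 1 N, (s t + c i) * q i t)
        (volume.restrict (Set.Ioc 0 T)) :=
      integrable_finset_sum _ (fun i hi =>
        hint_q i (Finset.mem_Icc.1 hi).1 (Finset.mem_Icc.1 hi).2)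
    have intF2 : Integrable (fun t => ∑ i ∈ Finset.Icc 1 N, ρ i * (r i t - q i t))
        (volume.restrict (Set.Ioc 0 T)) :=
      integrable_finset_sum _ (fun i hi =>
        (((hint_r0 i (Finset.mem_Icc.1 hi).1 (Finset.mem_Icc.1 hi).2).sub
          (hint_q0 i (Finset.mem_Icc.1 hi).1 (Finset.mem_Icc.1 hi).2)).const_mul (ρ i)))
    have intG : Integrable (fun t => ∑ i ∈ Finset.Icc 1 N, (s t + c i) * r i t)
        (volume.restrict (Set.Ioc 0 T)) :=
      integrable_finset_sum _ (fun i hi =>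
        hint_r i (Finset.mem_Icc.1 hi).1 (Finset.mem_Icc.1 hi).2)
    have hmono := setIntegral_mono_on (intF1.add intF2) intG measurableSet_Ioc hkey
    simp only [Pi.add_apply] at hmono
    rw [integral_add intF1 intF2,
      integral_finset_sum _ (fun i hi =>
        hint_q i (Finset.mem_Icc.1 hi).1 (Finset.mem_Icc.1 hi).2),
      integral_finset_sum _ (fun i hi => by
        exact (((hint_r0 i (Finset.mem_Icc.1 hi).1 (Finset.mem_Icc.1 hi).2).sub
          (hint_q0 i (Finset.mem_Icc.1 hi).1 (Finset.mem_Icc.1 hi).2)).const_mul (ρ i))),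
      integral_finset_sum _ (fun i hi =>
        hint_r i (Finset.mem_Icc.1 hi).1 (Finset.mem_Icc.1 hi).2)] at hmono
    have e0 : ∑ i ∈ Finset.Icc 1 N, ∫ t in Set.Ioc (0:ℝ) T, ρ i * (r i t - q i t) = 0 := by
      apply Finset.sum_eq_zero
      intro i hi
      obtain ⟨hi1, hi2⟩ := Finset.mem_Icc.1 hi
      rw [MeasureTheory.integral_const_mul, integral_sub (hint_r0 i hi1 hi2) (hint_q0 i hi1 hi2),
        hrQ i hi1 hi2, hqQ i hi1 hi2, sub_self, mul_zero]
    rw [e0, add_zero] at hmono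
    simp only [intervalIntegral.integral_of_le hT.le]
    exact hmono
  refine ⟨fun i hi t _ => hpnn i (Finset.mem_Icc.1 hi).1 (Finset.mem_Icc.1 hi).2 t,
    ⟨?_, ?_, ?_, ?_, ?_, ?_⟩, hopt⟩
  · intro i hi
    obtain ⟨hi1, hi2⟩ := Finset.mem_Icc.1 hi
    exact ⟨hqmeas i hi1 hi2, hpmeas i hi1 hi2⟩
  · intro i hi
    obtain ⟨hi1, hi2⟩ := Finset.mem_Icc.1 hi
    exact ⟨muhat N μ i + 4 * Ms, fun t _ =>
      ⟨by linarith [hqbd i hi1 hi2 t, hMs0],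
       by linarith [hpbd i hi1 hi2 t, (hmuhat i hi1 hi2).le]⟩⟩
  · intro i hi t _
    obtain ⟨hi1, hi2⟩ := Finset.mem_Icc.1 hi
    exact ⟨hqnn i hi1 hi2 t, hpnn i hi1 hi2 t⟩
  · intro i hi t ht
    obtain ⟨hi1, hi2⟩ := Finset.mem_Icc.1 hi
    exact hE1 i hi1 hi2 t ht
  · intro i hi t _
    obtain ⟨hi1, hi2⟩ := Finset.mem_Icc.1 hi
    refine ⟨(hG i hi1 hi2 t).1, fun hp0 => (hG i hi1 hi2 t).2 ?_⟩
    by_contra hc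
    rw [hp i hi t, if_neg hc] at hp0
    exact lt_irrefl 0 hp0
  · intro i hi
    obtain ⟨hi1, hi2⟩ := Finset.mem_Icc.1 hi
    exact hE3 i hi1 hi2
end
end
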